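/- arXiv:1205.3457 — 10 statements merged into one kernel-verified Lean document; each statement's English description precedes it below -/
import Mathlib

section
/- Let k be a field of characteristic p > 0. Then the maximal perfect subfield k^{p^∞} is algebraically closed in k; that is, every element of k that is algebraic over k^{p^∞} already belongs to k^{p^∞}. -/
/-- For a field `k` of characteristic `p > 0`, the maximal perfect subfield
`k^{p^∞} = ⋂ₙ k^{pⁿ}`, where `k^{pⁿ}` is the image of the `n`-fold Frobenius `x ↦ x^{pⁿ}`. -/
noncomputable def maximalPerfectSubfield (p : ℕ) (k : Type*) [Field k] [Fact p.Prime]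
    [CharP k p] : Subfield k :=
  ⨅ n : ℕ, (iterateFrobenius k p n).fieldRange

private lemma mem_mps_iff (p : ℕ) [Fact p.Prime] (k : Type*) [Field k] [CharP k p] (x : k) :
    x ∈ maximalPerfectSubfield p k ↔ ∀ n : ℕ, ∃ y : k, y ^ p ^ n = x := by
  simp [maximalPerfectSubfield, Subfield.mem_iInf, RingHom.mem_fieldRange,
    iterateFrobenius_def]

private lemma mps_perfectRing (p : ℕ) [Fact p.Prime] (k : Type*) [Field k] [CharP k p] :
    PerfectRing (maximalPerfectSubfield p k) p := by
  refine PerfectRing.ofSurjective _ p ?_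
  rintro ⟨a, ha⟩
  rw [mem_mps_iff] at ha
  obtain ⟨c, hc⟩ := ha 1
  refine ⟨⟨c, ?_⟩, ?_⟩
  · rw [mem_mps_iff]
    intro n
    obtain ⟨b, hb⟩ := ha (n + 1)
    refine ⟨b, ?_⟩
    have hinj : Function.Injective (frobenius k p) := frobenius_inj k p
    apply hinj
    simp only [frobenius_def]
    rw [← pow_mul, ← pow_succ, hb, ← hc, pow_one] at *
  · ext
    simpa [frobenius_def] using hc

set_option synthInstance.maxHeartbeats 1000000 in
set_option maxHeartbeats 2000000 in
/-- **Lemma 1.1(i)**: the maximal perfect subfield `k^{p^∞}` is algebraically closed in `k`: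
every element of `k` algebraic over `k^{p^∞}` already belongs to `k^{p^∞}`. -/
theorem maximalPerfectSubfield_algebraically_closed_in
    (p : ℕ) [Fact p.Prime] (k : Type*) [Field k] [CharP k p] (x : k)
    (hx : IsAlgebraic (maximalPerfectSubfield p k) x) :
    x ∈ maximalPerfectSubfield p k := by
  have : PerfectRing (maximalPerfectSubfield p k) p := mps_perfectRing p k
  have : PerfectField (maximalPerfectSubfield p k) := PerfectRing.toPerfectField _ p
  set F := maximalPerfectSubfield p k
  set L := IntermediateField.adjoin F {x} with hL
  have hxL : x ∈ L := IntermediateField.mem_adjoin_simple_self F x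
  have : FiniteDimensional F L := IntermediateField.adjoin.finiteDimensional hx.isIntegral
  have : Algebra.IsAlgebraic F L := Algebra.IsAlgebraic.of_finite F L
  have hPL : PerfectField L := Algebra.IsAlgebraic.perfectField (K := F)
  have hCL : CharP (↥L) p := inferInstance
  have : PerfectRing (↥L) p := PerfectField.toPerfectRing (K := ↥L) p
  rw [mem_mps_iff]
  intro n
  obtain ⟨z, hz⟩ := (bijective_iterateFrobenius (↥L) p n).2 ⟨x, hxL⟩
  refine ⟨z, ?_⟩
  have := congrArg (Subtype.val) hz
  simpa [iterateFrobenius_def] using this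
end

section
/- Let l/k be a finite extension of fields of characteristic p > 0. Then l^{p^∞} is a finite extension of k^{p^∞}, and [l^{p^∞} : k^{p^∞}] ≤ [l : k]. -/
theorem exists_relation_iInf {l : Type*} [Field l] (K : ℕ → Subfield l)
    (hK : ∀ {a b : ℕ}, a ≤ b → K b ≤ K a) {ι : Type*} [Fintype ι] (x : ι → l)
    (h : ∀ n, ∃ c : ι → l, (∀ i, c i ∈ K n) ∧ ∑ i, c i * x i = 0 ∧ c ≠ 0) :
    ∃ c : ι → l, (∀ i, c i ∈ ⨅ n, K n) ∧ ∑ i, c i * x i = 0 ∧ c ≠ 0 := by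
  classical
  set P : Finset ι → Prop := fun s =>
    ∀ n, ∃ c : ι → l, (∀ i, c i ∈ K n) ∧ ∑ i, c i * x i = 0 ∧ (∀ i ∉ s, c i = 0) ∧ c ≠ 0
    with hPdef
  have hex : ∃ j : ℕ, ∃ s : Finset ι, s.card = j ∧ P s := by
    refine ⟨(Finset.univ : Finset ι).card, Finset.univ, rfl, fun n => ?_⟩
    obtain ⟨c, h1, h2, h3⟩ := h n
    exact ⟨c, h1, h2, fun i hi => absurd (Finset.mem_univ i) hi, h3⟩
  obtain ⟨s, hscard, hPs⟩ := Nat.find_spec hex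
  have hmin : ∀ s' : Finset ι, s'.card < s.card → ¬ P s' := by
    intro s' hlt hPs'
    exact Nat.find_min hex (hscard ▸ hlt) ⟨s', rfl, hPs'⟩
  -- pick an index in the support
  obtain ⟨c0, _, _, hc0supp, hc0ne⟩ := hPs 0
  obtain ⟨i0, hi0ne⟩ := Function.ne_iff.mp hc0ne
  have hi0 : i0 ∈ s := by
    by_contra h'
    exact hi0ne (hc0supp i0 h')
  -- Claim: eventually every relation supported in s has nonzero i0-coefficient
  have claimC : ∃ N, ∀ n, N ≤ n → ∀ c : ι → l, (∀ i, c i ∈ K n) → ∑ i, c i * x i = 0 →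
      (∀ i ∉ s, c i = 0) → c ≠ 0 → c i0 ≠ 0 := by
    by_contra hcon
    push_neg at hcon
    have hPerase : P (s.erase i0) := by
      intro n
      obtain ⟨n', hn', c, hc1, hc2, hc3, hc4, hc5⟩ := hcon n
      refine ⟨c, fun i => hK hn' (hc1 i), hc2, ?_, hc4⟩
      intro i hi
      by_cases hii : i = i0
      · exact hii ▸ hc5
      · exact hc3 i fun hmem => hi (Finset.mem_erase.mpr ⟨hii, hmem⟩)
    exact hmin (s.erase i0) (Finset.card_erase_lt_of_mem hi0) hPerase
  obtain ⟨N, hN⟩ := claimC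
  obtain ⟨cN, hcN1, hcN2, hcN3, hcN4⟩ := hPs N
  have hcNi0 : cN i0 ≠ 0 := hN N le_rfl cN hcN1 hcN2 hcN3 hcN4
  set c : ι → l := fun i => (cN i0)⁻¹ * cN i with hcdef
  have hcmemN : ∀ i, c i ∈ K N := fun i =>
    (K N).mul_mem ((K N).inv_mem (hcN1 i0)) (hcN1 i)
  have hcsum : ∑ i, c i * x i = 0 := by
    have : ∑ i, c i * x i = (cN i0)⁻¹ * ∑ i, cN i * x i := by
      rw [Finset.mul_sum]
      exact Finset.sum_congr rfl fun i _ => by rw [hcdef]; ring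
    rw [this, hcN2, mul_zero]
  have hci0 : c i0 = 1 := inv_mul_cancel₀ hcNi0
  have hcsupp : ∀ i ∉ s, c i = 0 := fun i hi => by
    rw [hcdef]; simp [hcN3 i hi]
  have hcne : c ≠ 0 := by
    intro h0
    have := congrFun h0 i0
    rw [hci0] at this
    exact one_ne_zero this
  have hall : ∀ n i, c i ∈ K n := by
    intro n i
    rcases le_total n N with hnN | hNn
    · exact hK hnN (hcmemN i)
    · obtain ⟨cn, h1, h2, h3, h4⟩ := hPs n
      have hcni0 : cn i0 ≠ 0 := hN n hNn cn h1 h2 h3 h4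
      set c' : ι → l := fun i => (cn i0)⁻¹ * cn i with hc'def
      have hmem' : ∀ i, c' i ∈ K n := fun i =>
        (K n).mul_mem ((K n).inv_mem (h1 i0)) (h1 i)
      have hsum' : ∑ i, c' i * x i = 0 := by
        have : ∑ i, c' i * x i = (cn i0)⁻¹ * ∑ i, cn i * x i := by
          rw [Finset.mul_sum]
          exact Finset.sum_congr rfl fun i _ => by rw [hc'def]; ring
        rw [this, h2, mul_zero]
      have hi0' : c' i0 = 1 := inv_mul_cancel₀ hcni0
      have hsupp' : ∀ i ∉ s, c' i = 0 := fun i hi => by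
        rw [hc'def]; simp [h3 i hi]
      have hdiff : c = c' := by
        by_contra hne
        have hd : (fun i => c i - c' i) ≠ 0 := by
          intro h0
          refine hne (funext fun i => ?_)
          have := congrFun h0 i
          simpa [sub_eq_zero] using this
        have hdmem : ∀ i, c i - c' i ∈ K N := fun i =>
          (K N).sub_mem (hcmemN i) (hK hNn (hmem' i))
        have hdsum : ∑ i, (c i - c' i) * x i = 0 := by
          simp only [sub_mul, Finset.sum_sub_distrib, hcsum, hsum', sub_zero]
        have hdsupp : ∀ i ∉ s, c i - c' i = 0 := fun i hi => by
          rw [hcsupp i hi, hsupp' i hi, sub_zero]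
        have := hN N le_rfl _ hdmem hdsum hdsupp hd
        exact this (by rw [hci0, hi0', sub_self])
      rw [hdiff]
      exact hmem' i
  exact ⟨c, fun i => Subfield.mem_iInf.mpr fun n => hall n i, hcsum, hcne⟩

set_option maxHeartbeats 1000000 in
set_option synthInstance.maxHeartbeats 400000 in
/-- **Lemma 1.2(ii)**: let `l/k` be a finite extension of fields of characteristic `p > 0`.
Then `l^{p^∞}` is a finite extension of `k^{p^∞}` (viewed inside `l`), and
`[l^{p^∞} : k^{p^∞}] ≤ [l : k]`. -/
theorem maximalPerfectSubfield_finite_of_finite (p : ℕ) [Fact p.Prime]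
    (k l : Type*) [Field k] [Field l] [Algebra k l] [CharP k p] [CharP l p]
    [FiniteDimensional k l] :
    ∃ hle : (maximalPerfectSubfield p k).map (algebraMap k l) ≤ maximalPerfectSubfield p l,
      letI : Algebra ↥((maximalPerfectSubfield p k).map (algebraMap k l))
          ↥(maximalPerfectSubfield p l) := (Subfield.inclusion hle).toAlgebra
      FiniteDimensional ↥((maximalPerfectSubfield p k).map (algebraMap k l))
          ↥(maximalPerfectSubfield p l) ∧
        Module.finrank ↥((maximalPerfectSubfield p k).map (algebraMap k l))
            ↥(maximalPerfectSubfield p l) ≤ Module.finrank k l := by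
  classical
  have hle : (maximalPerfectSubfield p k).map (algebraMap k l) ≤ maximalPerfectSubfield p l := by
    intro x hx
    rw [Subfield.mem_map] at hx
    obtain ⟨y, hy, rfl⟩ := hx
    rw [maximalPerfectSubfield, Subfield.mem_iInf] at hy
    rw [maximalPerfectSubfield, Subfield.mem_iInf]
    intro n
    obtain ⟨z, hz⟩ := RingHom.mem_fieldRange.mp (hy n)
    refine RingHom.mem_fieldRange.mpr ⟨algebraMap k l z, ?_⟩
    rw [iterateFrobenius_def] at hz ⊢
    rw [← hz, map_pow]
  refine ⟨hle, ?_⟩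
  letI : Algebra ↥((maximalPerfectSubfield p k).map (algebraMap k l))
      ↥(maximalPerfectSubfield p l) := (Subfield.inclusion hle).toAlgebra
  have key : ∀ t : Finset ↥(maximalPerfectSubfield p l),
      (LinearIndependent ↥((maximalPerfectSubfield p k).map (algebraMap k l))
        fun i : t => (i : ↥(maximalPerfectSubfield p l))) → t.card ≤ Module.finrank k l := by
    intro t hind
    by_contra hlt
    push_neg at hlt
    set v : t → l := fun i => ((i : ↥(maximalPerfectSubfield p l)) : l) with hv
    set Kn : ℕ → Subfield l :=
      fun n => ((iterateFrobenius k p n).fieldRange).map (algebraMap k l) with hKn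
    have hchain : ∀ {a b : ℕ}, a ≤ b → Kn b ≤ Kn a := by
      intro a b hab x hx
      rw [hKn, Subfield.mem_map] at hx ⊢
      obtain ⟨y, hy, rfl⟩ := hx
      obtain ⟨z, hz⟩ := RingHom.mem_fieldRange.mp hy
      refine ⟨y, RingHom.mem_fieldRange.mpr ⟨z ^ p ^ (b - a), ?_⟩, rfl⟩
      rw [iterateFrobenius_def] at hz ⊢
      rw [← pow_mul, ← pow_add, Nat.sub_add_cancel hab, hz]
    have hrel : ∀ n, ∃ c : t → l, (∀ i, c i ∈ Kn n) ∧ ∑ i, c i * v i = 0 ∧ c ≠ 0 := by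
      intro n
      have hvmem : ∀ i : t, ∃ y : l, y ^ p ^ n = v i := by
        intro i
        have hmem : (v i) ∈ maximalPerfectSubfield p l := (i : ↥(maximalPerfectSubfield p l)).2
        rw [maximalPerfectSubfield, Subfield.mem_iInf] at hmem
        obtain ⟨y, hy⟩ := RingHom.mem_fieldRange.mp (hmem n)
        exact ⟨y, by rw [← hy, iterateFrobenius_def]⟩
      choose y hy using hvmem
      have hnli : ¬ LinearIndependent k y := by
        intro hli
        have := hli.fintype_card_le_finrank
        rw [Fintype.card_coe] at this
        omega
      rw [Fintype.not_linearIndependent_iff] at hnli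
      obtain ⟨g, hg, j, hgj⟩ := hnli
      refine ⟨fun i => algebraMap k l (g i ^ p ^ n), fun i => Subfield.mem_map.mpr
        ⟨g i ^ p ^ n, RingHom.mem_fieldRange.mpr ⟨g i, rfl⟩, rfl⟩, ?_, ?_⟩
      · haveI : ExpChar l p := ExpChar.prime (Fact.out : p.Prime)
        have hterm : ∀ i : t, algebraMap k l (g i ^ p ^ n) * v i =
            iterateFrobenius l p n (algebraMap k l (g i) * y i) := by
          intro i
          rw [iterateFrobenius_def, map_pow, ← hy i, mul_pow]
        rw [Finset.sum_congr rfl fun i _ => hterm i, ← map_sum (iterateFrobenius l p n)]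
        have hz : ∑ i : t, algebraMap k l (g i) * y i = 0 := by
          rw [← hg]
          exact Finset.sum_congr rfl fun i _ => (Algebra.smul_def (g i) (y i)).symm
        rw [hz, map_zero]
      · intro h0
        have h0j := congrFun h0 j
        simp only [Pi.zero_apply] at h0j
        have hgpn : g j ^ p ^ n ≠ 0 := pow_ne_zero _ hgj
        exact hgpn ((algebraMap k l).injective (by rw [h0j, map_zero]))
    obtain ⟨c, hcmem, hcsum, hcne⟩ := exists_relation_iInf Kn hchain v hrel
    have hmem : ∀ i, c i ∈ (maximalPerfectSubfield p k).map (algebraMap k l) := by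
      intro i
      obtain ⟨w, _, hweq⟩ := Subfield.mem_map.mp (Subfield.mem_iInf.mp (hcmem i) 0)
      refine Subfield.mem_map.mpr ⟨w, ?_, hweq⟩
      rw [maximalPerfectSubfield, Subfield.mem_iInf]
      intro n
      obtain ⟨z, hz, hzeq⟩ := Subfield.mem_map.mp (Subfield.mem_iInf.mp (hcmem i) n)
      have : z = w := (algebraMap k l).injective (hzeq.trans hweq.symm)
      rwa [this] at hz
    set G : t → ↥((maximalPerfectSubfield p k).map (algebraMap k l)) :=
      fun i => ⟨c i, hmem i⟩ with hG
    have hGsum : ∑ i, G i • ((i : t) : ↥(maximalPerfectSubfield p l)) = 0 := by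
      have hcoe : (maximalPerfectSubfield p l).subtype
          (∑ i, G i • ((i : t) : ↥(maximalPerfectSubfield p l))) = ∑ i, c i * v i := by
        rw [map_sum]
        refine Finset.sum_congr rfl fun i _ => ?_
        show ((G i • ((i : t) : ↥(maximalPerfectSubfield p l)) :
          ↥(maximalPerfectSubfield p l)) : l) = c i * v i
        rw [Algebra.smul_def, RingHom.algebraMap_toAlgebra]
        rfl
      have h0 := hcoe.trans hcsum
      exact Subtype.ext h0
    have hall := Fintype.linearIndependent_iff.mp hind G hGsum
    obtain ⟨j, hj⟩ := Function.ne_iff.mp hcne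
    exact hj (congrArg Subtype.val (hall j))
  have hrank : Module.rank ↥((maximalPerfectSubfield p k).map (algebraMap k l))
      ↥(maximalPerfectSubfield p l) ≤ Module.finrank k l := rank_le key
  haveI hfin : FiniteDimensional ↥((maximalPerfectSubfield p k).map (algebraMap k l))
      ↥(maximalPerfectSubfield p l) :=
    Module.rank_lt_aleph0_iff.mp (lt_of_le_of_lt hrank (Cardinal.nat_lt_aleph0 _))
  exact ⟨hfin, Module.finrank_le_of_rank_le hrank⟩
end

section
/- Let K be a field of characteristic 0, let F be a subfield of K that is algebraically closed in K, and let L/K be a finite Galois extension. Let F_L be the relative algebraic closure of F in L. Then: (a) F_L is stable under every element of Gal(L/K); (b) F_L/F is a finite Galois extension; (c) the restriction homomorphism Gal(L/K) → Gal(F_L/F) is surjective; and (d) the fixed field of Gal(L/K) acting on F_L is F. -/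
set_option linter.unusedSectionVars false
open Polynomial IntermediateField Module

section Aux

variable {F K L : Type*} [Field F] [Field K] [Field L]
    [Algebra F K] [Algebra K L] [Algebra F L] [IsScalarTower F K L]
    [FiniteDimensional K L] [IsGalois K L]

theorem aux_minpoly_map
    (halgc : ∀ x : K, IsAlgebraic F x → ∃ y : F, algebraMap F K y = x)
    {x : L} (hx : x ∈ algebraicClosure F L) :
    (minpoly F x).map (algebraMap F K) = minpoly K x := by
  have hxF : IsIntegral F x := mem_algebraicClosure_iff'.1 hx
  have hxK : IsIntegral K x := hxF.tower_top
  have hdvd : minpoly K x ∣ (minpoly F x).map (algebraMap F K) :=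
    minpoly.dvd_map_of_isScalarTower F K x
  set p := minpoly K x with hp
  have hpm : p.Monic := minpoly.monic hxK
  have hroots : ∀ r ∈ (p.map (algebraMap K L)).roots, r ∈ algebraicClosure F L := by
    intro r hr
    have h0 : aeval r p = 0 := by
      have := (mem_roots'.1 hr).2
      rwa [IsRoot.def, eval_map, ← aeval_def] at this
    have h1 : aeval r ((minpoly F x).map (algebraMap F K)) = 0 :=
      aeval_eq_zero_of_dvd_aeval_eq_zero hdvd h0
    rw [aeval_map_algebraMap] at h1
    exact mem_algebraicClosure_iff.2 ⟨minpoly F x, minpoly.ne_zero hxF, h1⟩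
  have hsplit : (p.map (algebraMap K L)).Splits := (inferInstance : Normal K L).splits x
  have hcoeff : ∀ n, algebraMap K L (p.coeff n) ∈ algebraicClosure F L := by
    intro n
    set pm := p.map (algebraMap K L) with hpmdef
    have hm : pm.Monic := hpm.map _
    have hs : pm.Splits := hsplit
    have heq : pm = (pm.roots.map fun a => X - C a).prod :=
      hs.eq_prod_roots_of_monic hm
    set E := algebraicClosure F L
    let q : E[X] := (pm.roots.attach.map fun r => X - C (⟨r.1, hroots r.1 r.2⟩ : E)).prod
    have hq : q.map (algebraMap E L) = pm := by
      rw [Polynomial.map_multiset_prod, Multiset.map_map]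
      conv_rhs => rw [heq, ← Multiset.attach_map_val pm.roots, Multiset.map_map]
      congr 1
      apply Multiset.map_congr rfl
      intro r _
      simp [Polynomial.map_sub, IntermediateField.algebraMap_apply]
    have h1 : algebraMap K L (p.coeff n) = algebraMap E L (q.coeff n) := by
      have := congrArg (fun r => Polynomial.coeff r n) hq
      simp only [coeff_map] at this
      rw [this, hpmdef, coeff_map]
    rw [h1, IntermediateField.algebraMap_apply]
    exact SetLike.coe_mem _
  have hrange : ∀ n, p.coeff n ∈ Set.range (algebraMap F K) := by
    intro n
    have halg : IsAlgebraic F (algebraMap K L (p.coeff n)) :=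
      mem_algebraicClosure_iff.1 (hcoeff n)
    rw [isAlgebraic_algebraMap_iff (algebraMap K L).injective] at halg
    exact halgc _ halg
  obtain ⟨q0, hq0map, hq0deg, hq0monic⟩ := Polynomial.lifts_and_degree_eq_and_monic
    ((Polynomial.lifts_iff_coeff_lifts p).2 hrange) hpm
  have haev : aeval x q0 = 0 := by
    have h2 : aeval x (q0.map (algebraMap F K)) = aeval x q0 := aeval_map_algebraMap _ _ _
    rw [hq0map] at h2
    rw [← h2]
    exact minpoly.aeval K x
  have hFdvd : minpoly F x ∣ q0 := minpoly.dvd F x haev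
  have d1 : (minpoly F x).natDegree ≤ p.natDegree := by
    have := Polynomial.natDegree_le_of_dvd hFdvd hq0monic.ne_zero
    rwa [natDegree_eq_of_degree_eq hq0deg] at this
  set M := (minpoly F x).map (algebraMap F K) with hM
  have hMm : M.Monic := (minpoly.monic hxF).map _
  have hMdeg : M.natDegree = (minpoly F x).natDegree := natDegree_map _
  obtain ⟨c, hc⟩ := hdvd
  have hcm : c.Monic := hpm.of_mul_monic_left (hc ▸ hMm)
  have hdegc : c.natDegree = 0 := by
    have := congrArg Polynomial.natDegree hc
    rw [Polynomial.natDegree_mul hpm.ne_zero hcm.ne_zero, hMdeg] at this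
    omega
  have : c = 1 := hcm.natDegree_eq_zero.1 hdegc
  rw [hc, this, mul_one]

theorem aux_bound
    (halgc : ∀ x : K, IsAlgebraic F x → ∃ y : F, algebraMap F K y = x)
    (x : L) (hx : x ∈ algebraicClosure F L) :
    finrank F ↥F⟮x⟯ ≤ finrank K L := by
  have hint : IsIntegral F x := mem_algebraicClosure_iff'.1 hx
  rw [adjoin.finrank hint]
  have h2 := aux_minpoly_map (K := K) halgc hx
  have h3 : (minpoly F x).natDegree = (minpoly K x).natDegree := by
    rw [← h2, natDegree_map]
  rw [h3]
  exact minpoly.natDegree_le _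

theorem aux_map_top {E : IntermediateField F L} :
    (⊤ : IntermediateField F ↥E).map E.val = E := by
  ext y
  constructor
  · rintro ⟨x, -, rfl⟩; exact x.2
  · intro hy; exact ⟨⟨y, hy⟩, trivial, rfl⟩

theorem aux_findim [CharZero K]
    (halgc : ∀ x : K, IsAlgebraic F x → ∃ y : F, algebraMap F K y = x) :
    FiniteDimensional F ↥(algebraicClosure F L) := by
  haveI : CharZero F := (algebraMap F K).charZero
  set E := algebraicClosure F L with hE
  set S : Set ℕ := Set.range (fun x : ↥E => finrank F ↥F⟮(x : L)⟯) with hS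
  have hne : S.Nonempty := ⟨_, ⟨0, rfl⟩⟩
  have hbdd : BddAbove S :=
    ⟨finrank K L, by rintro _ ⟨x, rfl⟩; exact aux_bound halgc _ x.2⟩
  obtain ⟨a, ha⟩ := Nat.sSup_mem hne hbdd
  have hintE : ∀ y : ↥E, IsIntegral F ((y : L)) :=
    fun y => mem_algebraicClosure_iff'.1 y.2
  haveI hfa : FiniteDimensional F ↥F⟮(a : L)⟯ := adjoin.finiteDimensional (hintE a)
  have htop : ∀ b : ↥E, (b : L) ∈ F⟮(a : L)⟯ := by
    intro b
    haveI : FiniteDimensional F ↥F⟮(b : L)⟯ := adjoin.finiteDimensional (hintE b)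
    set Fab : IntermediateField F L := F⟮(a : L)⟯ ⊔ F⟮(b : L)⟯ with hFab
    haveI : FiniteDimensional F ↥Fab := IntermediateField.finiteDimensional_sup _ _
    haveI : Algebra.IsAlgebraic F ↥Fab := Algebra.IsAlgebraic.of_finite F _
    haveI : Algebra.IsSeparable F ↥Fab := inferInstance
    obtain ⟨c, hc⟩ := Field.exists_primitive_element F ↥Fab
    have hlift : F⟮(c : L)⟯ = Fab := by
      have h4 := congrArg (IntermediateField.map Fab.val) hc
      rwa [adjoin_map, Set.image_singleton, aux_map_top] at h4
    have hFabE : Fab ≤ E := by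
      apply sup_le <;> rw [adjoin_le_iff] <;> intro y hy <;>
        rw [Set.mem_singleton_iff] at hy <;> subst hy
      · exact a.2
      · exact b.2
    have h1 : finrank F ↥F⟮(c : L)⟯ ≤ sSup S :=
      le_csSup hbdd ⟨⟨(c : L), hFabE c.2⟩, rfl⟩
    have ha' : finrank F ↥F⟮(a : L)⟯ = sSup S := ha
    have h3 : finrank F ↥Fab ≤ finrank F ↥F⟮(a : L)⟯ := by
      rw [ha', ← hlift]; exact h1
    have h4 : F⟮(a : L)⟯ = Fab :=
      IntermediateField.eq_of_le_of_finrank_le le_sup_left h3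
    have hb : (b : L) ∈ Fab :=
      (le_sup_right : F⟮(b : L)⟯ ≤ Fab) (mem_adjoin_simple_self F (b : L))
    rwa [← h4] at hb
  have hEeq : E = F⟮(a : L)⟯ := by
    apply le_antisymm
    · intro y hy; exact htop ⟨y, hy⟩
    · rw [adjoin_le_iff]; intro y hy; rw [Set.mem_singleton_iff] at hy; subst hy; exact a.2
  rw [hEeq]
  exact hfa

theorem aux_normal
    (halgc : ∀ x : K, IsAlgebraic F x → ∃ y : F, algebraMap F K y = x) :
    Normal F ↥(algebraicClosure F L) := by
  rw [normal_iff]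
  intro x
  have hxL : (↑x : L) ∈ algebraicClosure F L := x.2
  have hint : IsIntegral F x := (Algebra.IsAlgebraic.isAlgebraic (R := F) x).isIntegral
  refine ⟨hint, ?_⟩
  have h1 : minpoly F ((algebraicClosure F L).val x) = minpoly F x :=
    minpoly.algHom_eq (algebraicClosure F L).val (algebraicClosure F L).val.injective x
  rw [← h1]
  have h2 := aux_minpoly_map (K := K) halgc (x := ((algebraicClosure F L).val x))
    (SetLike.coe_mem x)
  have hsplitL : ((minpoly F ((algebraicClosure F L).val x)).map (algebraMap F L)).Splits := by
    have h3 : ((minpoly K ((algebraicClosure F L).val x)).map (algebraMap K L)).Splits :=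
      (inferInstance : Normal K L).splits _
    rw [← h2, Polynomial.map_map, ← IsScalarTower.algebraMap_eq] at h3
    exact h3
  exact Splits.algebraicClosure _ hsplitL

end Aux

/-- **Lemma 1.4(ii)** (field-theoretic content): let `K` be a field of characteristic `0`,
`F ⊆ K` a subfield algebraically closed in `K`, and `L/K` a finite Galois extension.
Let `F_L = algebraicClosure F L` be the relative algebraic closure of `F` in `L`.  Then:
(a) `F_L` is stable under every element of `Gal(L/K)`;
(b) `F_L/F` is a finite Galois extension;
(c) the restriction map `Gal(L/K) → Gal(F_L/F)` is surjective, i.e. every `F`-algebra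
    automorphism of `F_L` is the restriction of some `g ∈ Gal(L/K)`; and
(d) the fixed field of `Gal(L/K)` acting on `F_L` is `F`. -/
theorem relativeAlgebraicClosure_of_finite_galois
    (F K L : Type*) [Field F] [Field K] [Field L] [CharZero K]
    [Algebra F K] [Algebra K L] [Algebra F L] [IsScalarTower F K L]
    (halgc : ∀ x : K, IsAlgebraic F x → ∃ y : F, algebraMap F K y = x)
    [FiniteDimensional K L] [IsGalois K L] :
    (∀ g : L ≃ₐ[K] L,
        (algebraicClosure F L).map ((g.restrictScalars F : L ≃ₐ[F] L) : L →ₐ[F] L)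
          = algebraicClosure F L) ∧
    (FiniteDimensional F (algebraicClosure F L) ∧ IsGalois F (algebraicClosure F L)) ∧
    (∀ σ : (algebraicClosure F L) ≃ₐ[F] (algebraicClosure F L),
        ∃ g : L ≃ₐ[K] L, ∀ x : algebraicClosure F L, g ↑x = ↑(σ x)) ∧
    (∀ x : L, x ∈ algebraicClosure F L →
        ((∀ g : L ≃ₐ[K] L, g x = x) ↔ ∃ y : F, algebraMap F L y = x)) := by
  haveI : CharZero F := (algebraMap F K).charZero
  haveI hfd : FiniteDimensional F (algebraicClosure F L) := aux_findim halgc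
  haveI hnorm : Normal F (algebraicClosure F L) := aux_normal halgc
  haveI hsep : Algebra.IsSeparable F (algebraicClosure F L) := inferInstance
  haveI hgal : IsGalois F (algebraicClosure F L) := ⟨⟩
  refine ⟨?_, ⟨hfd, hgal⟩, ?_, ?_⟩
  · intro g
    exact algebraicClosure.map_eq_of_algEquiv (g.restrictScalars F)
  · -- (c) surjectivity of restriction
    intro σ
    obtain ⟨α, hα⟩ := Field.exists_primitive_element F ↥(algebraicClosure F L)
    have hαL : (↑α : L) ∈ algebraicClosure F L := α.2
    have hintF : IsIntegral F ((↑α : L)) := mem_algebraicClosure_iff'.1 hαL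
    have hintK : IsIntegral K ((↑α : L)) := hintF.tower_top
    have h1 : minpoly F ((↑α : L)) = minpoly F α :=
      minpoly.algHom_eq (algebraicClosure F L).val (algebraicClosure F L).val.injective α
    have h2 := aux_minpoly_map (K := K) halgc hαL
    -- σ α is a root of minpoly K ↑α
    have h3 : aeval (σ α) (minpoly F α) = 0 := by
      rw [show σ α = (σ : ↥(algebraicClosure F L) →ₐ[F] ↥(algebraicClosure F L)) α from rfl, Polynomial.aeval_algHom_apply,
        minpoly.aeval, map_zero]
    have haev : aeval ((↑(σ α)) : L) (minpoly K ((↑α : L))) = 0 := by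
      rw [← h2, aeval_map_algebraMap, h1,
        show ((↑(σ α)) : L) = algebraMap ↥(algebraicClosure F L) L (σ α) from rfl,
        Polynomial.aeval_algebraMap_apply, h3, map_zero]
    have hmem : ((↑(σ α)) : L) ∈ (minpoly K ((↑α : L))).aroots L := by
      rw [Polynomial.mem_aroots]
      exact ⟨minpoly.ne_zero hintK, haev⟩
    let ψ : K⟮(↑α : L)⟯ →ₐ[K] L :=
      (IntermediateField.algHomAdjoinIntegralEquiv K hintK).symm ⟨_, hmem⟩
    have hψ : ψ (AdjoinSimple.gen K (↑α : L)) = ((↑(σ α)) : L) :=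
      IntermediateField.algHomAdjoinIntegralEquiv_symm_apply_gen K hintK _
    let g' : L →ₐ[K] L := ψ.liftNormal L
    let g : L ≃ₐ[K] L := AlgEquiv.ofBijective g' (AlgHom.normal_bijective K L L g')
    have hgα : g ((↑α : L)) = ((↑(σ α)) : L) := by
      have h5 : ((↑α : L)) = algebraMap K⟮(↑α : L)⟯ L (AdjoinSimple.gen K (↑α : L)) :=
        (AdjoinSimple.algebraMap_gen K _).symm
      show g' ((↑α : L)) = _
      rw [h5, AlgHom.liftNormal_commutes, hψ]
      simp
    refine ⟨g, ?_⟩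
    -- the two F-algebra homs E →ₐ[F] L agree on α, hence everywhere
    have hEadj : algebraicClosure F L = adjoin F ({(↑α : L)} : Set L) := by
      have h6 := congrArg (IntermediateField.map (algebraicClosure F L).val) hα
      rw [adjoin_map, Set.image_singleton, aux_map_top] at h6
      exact h6.symm
    let φ₁ : ↥(algebraicClosure F L) →ₐ[F] L := ((g.restrictScalars F : L ≃ₐ[F] L) : L →ₐ[F] L).comp (algebraicClosure F L).val
    let φ₂ : ↥(algebraicClosure F L) →ₐ[F] L := (algebraicClosure F L).val.comp (σ : ↥(algebraicClosure F L) →ₐ[F] ↥(algebraicClosure F L))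
    have hφ : φ₁ = φ₂ := by
      apply IntermediateField.algHom_ext_of_eq_adjoin F hEadj
      intro x hx
      rw [Set.mem_singleton_iff] at hx
      subst hx
      have hsub : (⟨(↑α : L), hEadj.ge (subset_adjoin _ _ rfl)⟩ : ↥(algebraicClosure F L)) = α :=
        Subtype.ext rfl
      show g ((algebraicClosure F L).val _) = (algebraicClosure F L).val (σ _)
      rw [hsub]
      exact hgα
    intro x
    exact AlgHom.congr_fun hφ x
  · -- (d) fixed field
    intro x hx
    constructor
    · intro hg
      have hfix : x ∈ IntermediateField.fixedField (⊤ : Subgroup (L ≃ₐ[K] L)) :=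
        fun g => hg g.1
      have hle : IntermediateField.fixedField (⊤ : Subgroup (L ≃ₐ[K] L))
          ≤ IntermediateField.fixedField
            (IntermediateField.fixingSubgroup (⊥ : IntermediateField K L)) :=
        fun y hy g => hy ⟨g.1, trivial⟩
      have hbot := IsGalois.fixedField_fixingSubgroup (⊥ : IntermediateField K L)
      have hxbot : x ∈ (⊥ : IntermediateField K L) := by
        rw [← hbot]; exact hle hfix
      obtain ⟨y, hy⟩ := IntermediateField.mem_bot.1 hxbot
      have halgy : IsAlgebraic F y := by
        have := mem_algebraicClosure_iff.1 hx
        rw [← hy, isAlgebraic_algebraMap_iff (algebraMap K L).injective] at this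
        exact this
      obtain ⟨z, hz⟩ := halgc y halgy
      refine ⟨z, ?_⟩
      rw [IsScalarTower.algebraMap_apply F K L, hz, hy]
    · rintro ⟨y, rfl⟩ g
      rw [IsScalarTower.algebraMap_apply F K L]
      exact g.commutes _
end

section
/- Let K be a field of characteristic 0, let F be a subfield of K that is algebraically closed in K, and let L/K be a finite extension. Let F_L be the relative algebraic closure of F in L. Then F_L/F is a finite extension and [F_L : F] ≤ [L : K]. -/
open Polynomial IntermediateField

lemma minpoly_map_eq_aux {F K L : Type*} [Field F] [Field K] [Field L]
    [Algebra F K] [Algebra K L] [Algebra F L] [IsScalarTower F K L]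
    (halgc : ∀ x : K, IsAlgebraic F x → ∃ y : F, algebraMap F K y = x)
    {x : L} (hx : IsIntegral F x) :
    minpoly K x = (minpoly F x).map (algebraMap F K) := by
  have hxK : IsIntegral K x := hx.tower_top
  have hdvd : minpoly K x ∣ (minpoly F x).map (algebraMap F K) :=
    minpoly.dvd_map_of_isScalarTower F K x
  have hmem := integralClosure.mem_lifts_of_monic_of_dvd_map K (minpoly.monic hx)
      (minpoly.monic hxK) hdvd
  have hmem' : minpoly K x ∈ lifts (algebraMap F K) := by
    rw [lifts_iff_coeff_lifts] at hmem ⊢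
    intro n
    obtain ⟨⟨c, hc⟩, hc2⟩ := hmem n
    obtain ⟨y, hy⟩ := halgc c (hc.isAlgebraic)
    exact ⟨y, by rw [hy, ← hc2]; rfl⟩
  obtain ⟨g, hg1, hg2, hg3⟩ := lifts_and_degree_eq_and_monic hmem' (minpoly.monic hxK)
  have hgx : Polynomial.aeval x g = 0 := by
    rw [← aeval_map_algebraMap K, hg1, minpoly.aeval]
  have hFg : minpoly F x ∣ g := minpoly.dvd F x hgx
  have hdeg : ((minpoly F x).map (algebraMap F K)).natDegree ≤ (minpoly K x).natDegree := by
    rw [natDegree_map, ← natDegree_eq_of_degree_eq hg2]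
    exact Polynomial.natDegree_le_of_dvd hFg hg3.ne_zero
  exact (eq_of_monic_of_dvd_of_natDegree_le (minpoly.monic hxK)
      ((minpoly.monic hx).map _) hdvd hdeg).symm

lemma finiteDimensional_of_simple_degree_bounded (F E : Type*) [Field F] [Field E]
    [Algebra F E] [Infinite F] [Algebra.IsIntegral F E] [Algebra.IsSeparable F E] (n : ℕ)
    (h : ∀ x : E, Module.finrank F F⟮x⟯ ≤ n) :
    FiniteDimensional F E ∧ Module.finrank F E ≤ n := by
  let d : E → ℕ := fun x => Module.finrank F F⟮x⟯
  let s : Set ℕ := Set.range d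
  have hbdd : BddAbove s := ⟨n, by rintro _ ⟨x, rfl⟩; exact h x⟩
  have hne : s.Nonempty := ⟨_, ⟨0, rfl⟩⟩
  obtain ⟨x₀, hx₀⟩ := Nat.sSup_mem hne hbdd
  have htop : F⟮x₀⟯ = (⊤ : IntermediateField F E) := by
    rw [eq_top_iff]
    intro y _
    obtain ⟨γ, hγ⟩ := Field.primitive_element_inf_aux F x₀ y
    haveI : FiniteDimensional F F⟮γ⟯ :=
      adjoin.finiteDimensional (Algebra.IsIntegral.isIntegral γ)
    have hle : F⟮x₀⟯ ≤ F⟮γ⟯ := by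
      rw [← hγ]
      exact adjoin.mono F _ _ (by simp)
    have hfr : d γ ≤ d x₀ := by
      rw [hx₀]
      exact le_csSup hbdd ⟨γ, rfl⟩
    have heq := IntermediateField.eq_of_le_of_finrank_le hle hfr
    have hy : y ∈ F⟮x₀, y⟯ := subset_adjoin F _ (by simp)
    rwa [hγ, ← heq] at hy
  haveI hfd : FiniteDimensional F F⟮x₀⟯ :=
    adjoin.finiteDimensional (Algebra.IsIntegral.isIntegral x₀)
  haveI : FiniteDimensional F (⊤ : IntermediateField F E) := htop ▸ hfd
  haveI : FiniteDimensional F E :=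
    (IntermediateField.topEquiv (F := F) (E := E)).toLinearEquiv.finiteDimensional
  refine ⟨inferInstance, ?_⟩
  have hEtop : Module.finrank F E = d x₀ := by
    show _ = Module.finrank F F⟮x₀⟯
    rw [htop]
    exact (IntermediateField.topEquiv (F := F) (E := E)).toLinearEquiv.finrank_eq.symm
  rw [hEtop, hx₀]
  exact csSup_le hne (by rintro _ ⟨x, rfl⟩; exact h x)

/-- **Lemma 1.4(iii)** (field-theoretic content): let `K` be a field of characteristic `0`,
`F ⊆ K` a subfield algebraically closed in `K`, and `L/K` a finite extension.  Let
`F_L = algebraicClosure F L` be the relative algebraic closure of `F` in `L`.  Then `F_L/F`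
is a finite extension and `[F_L : F] ≤ [L : K]`. -/
theorem relativeAlgebraicClosure_finite_of_finite
    (F K L : Type*) [Field F] [Field K] [Field L] [CharZero K]
    [Algebra F K] [Algebra K L] [Algebra F L] [IsScalarTower F K L]
    (halgc : ∀ x : K, IsAlgebraic F x → ∃ y : F, algebraMap F K y = x)
    [FiniteDimensional K L] :
    FiniteDimensional F (algebraicClosure F L) ∧
      Module.finrank F (algebraicClosure F L) ≤ Module.finrank K L := by
  haveI : CharZero F := (algebraMap F K).charZero
  have hint : ∀ x : algebraicClosure F L, IsIntegral F x := fun x =>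
    (isIntegral_algebraMap_iff (algebraMap (algebraicClosure F L) L).injective).1
      (mem_algebraicClosure_iff'.1 x.2)
  haveI : Algebra.IsIntegral F (algebraicClosure F L) := ⟨hint⟩
  refine finiteDimensional_of_simple_degree_bounded F (algebraicClosure F L)
    (Module.finrank K L) fun x => ?_
  have hxL : IsIntegral F (x : L) := mem_algebraicClosure_iff'.1 x.2
  have hxK : IsIntegral K (x : L) := hxL.tower_top
  rw [adjoin.finrank (hint x)]
  have h1 : minpoly F x = minpoly F (x : L) :=
    (minpoly.algebraMap_eq (algebraMap (algebraicClosure F L) L).injective x).symm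
  have h3 : (minpoly F (x : L)).natDegree
      = Module.finrank K (adjoin K ({(x : L)} : Set L)) := by
    rw [adjoin.finrank hxK, minpoly_map_eq_aux halgc hxL, Polynomial.natDegree_map]
  rw [h1, h3]
  exact (adjoin K ({(x : L)} : Set L)).toSubmodule.finrank_le
end

section
/- Let K be a field of characteristic 0, let F be a subfield of K that is algebraically closed in K, fix an algebraic closure K̄ of K, and let K' ⊆ K̄ be a finite extension of F. Let KK' denote the compositum of K and K' inside K̄. Then the relative algebraic closure of F in KK' equals K'. -/
set_option maxHeartbeats 1000000
set_option synthInstance.maxHeartbeats 1000000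

open Polynomial IntermediateField

lemma natDegree_minpoly_eq_of_relAlgClosed
    {F Ω : Type*} [Field F] [Field Ω] [Algebra F Ω]
    (K : IntermediateField F Ω)
    (halgc : ∀ x : Ω, x ∈ K → IsIntegral F x → ∃ a : F, algebraMap F Ω a = x)
    (γ : Ω) (hγ : IsIntegral F γ) :
    (minpoly ↥K γ).natDegree = (minpoly F γ).natDegree := by
  have hγK : IsIntegral ↥K γ := hγ.tower_top
  have h1 : minpoly ↥K γ ∣ (minpoly F γ).map (algebraMap F ↥K) :=
    minpoly.dvd_map_of_isScalarTower F ↥K γ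
  have hle : (minpoly ↥K γ).natDegree ≤ (minpoly F γ).natDegree := by
    simpa [natDegree_map] using
      Polynomial.natDegree_le_of_dvd h1 (((minpoly.monic hγ).map _).ne_zero)
  refine le_antisymm hle ?_
  have hmem := integralClosure.mem_lifts_of_monic_of_dvd_map (R := F) ↥K
    (minpoly.monic hγ) (minpoly.monic hγK) h1
  have hmem' : minpoly ↥K γ ∈ lifts (algebraMap F ↥K) := by
    rw [lifts_iff_coeff_lifts] at hmem ⊢
    intro n
    obtain ⟨⟨y, hy⟩, hy'⟩ := hmem n
    have hy'' : y = (minpoly ↥K γ).coeff n := hy'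
    have hyΩ : IsIntegral F (y : Ω) := hy.map (IsScalarTower.toAlgHom F ↥K Ω)
    obtain ⟨a, ha⟩ := halgc (y : Ω) y.2 hyΩ
    refine ⟨a, ?_⟩
    rw [← hy'']
    apply Subtype.val_injective
    rw [← ha, IsScalarTower.algebraMap_apply F ↥K Ω]
    rfl
  obtain ⟨q, hq1, hq2, hq3⟩ :=
    Polynomial.lifts_and_degree_eq_and_monic hmem' (minpoly.monic hγK)
  have haev : Polynomial.aeval γ q = 0 := by
    rw [← Polynomial.aeval_map_algebraMap ↥K, hq1, minpoly.aeval]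
  have hdvd2 : minpoly F γ ∣ q := minpoly.dvd F γ haev
  calc (minpoly F γ).natDegree ≤ q.natDegree :=
        Polynomial.natDegree_le_of_dvd hdvd2 hq3.ne_zero
    _ = (minpoly ↥K γ).natDegree := natDegree_eq_of_degree_eq hq2

lemma exists_adjoin_simple_eq
    {F Ω : Type*} [Field F] [Field Ω] [Algebra F Ω]
    (M : IntermediateField F Ω) [FiniteDimensional F ↥M] [Algebra.IsSeparable F ↥M] :
    ∃ β : Ω, β ∈ M ∧ F⟮β⟯ = M := by
  obtain ⟨β, hβ⟩ := Field.exists_primitive_element F ↥M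
  refine ⟨(β : Ω), β.2, ?_⟩
  have := congrArg (IntermediateField.map M.val) hβ
  rwa [IntermediateField.adjoin_map, Set.image_singleton,
    ← AlgHom.fieldRange_eq_map, IntermediateField.fieldRange_val] at this

/-- **Lemma 1.4(iv)** (field-theoretic content): let `K` be a field of characteristic `0`,
`F ⊆ K` a subfield algebraically closed in `K`, `K̄` (here `Ω`) an algebraic closure of `K`,
and `K' ⊆ K̄` a finite extension of `F`.  Then the relative algebraic closure of `F` in the
compositum `KK'` equals `K'`; that is,
`{x ∈ K ⊔ K' | x is algebraic over F} = K'`. -/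
theorem relativeAlgebraicClosure_in_compositum
    (Ω : Type*) [Field Ω] [CharZero Ω] [IsAlgClosed Ω]
    (K F K' : Subfield Ω) (hFK : F ≤ K)
    (halgc : ∀ x ∈ K, IsAlgebraic (↥F) x → x ∈ F)
    (halg : Algebra.IsAlgebraic K Ω)
    (hFK' : F ≤ K')
    (hfin : letI : Algebra ↥F ↥K' := (Subfield.inclusion hFK').toAlgebra;
      Module.Finite ↥F ↥K') :
    {x : Ω | x ∈ K ⊔ K' ∧ IsAlgebraic (↥F) x} = (K' : Set Ω) := by
  haveI : CharZero ↥F := inferInstance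
  set Ki : IntermediateField ↥F Ω := Subfield.toIntermediateField K (fun x => hFK x.2) with hKi
  set K'i : IntermediateField ↥F Ω := Subfield.toIntermediateField K' (fun x => hFK' x.2) with hK'i
  haveI hfd : FiniteDimensional ↥F ↥K'i := hfin
  have halgc' : ∀ x : Ω, x ∈ Ki → IsIntegral ↥F x → ∃ a : ↥F, algebraMap ↥F Ω a = x := by
    intro x hx hint
    exact ⟨⟨x, halgc x hx hint.isAlgebraic⟩, rfl⟩
  have hsub : (Ki ⊔ K'i).toSubfield = K ⊔ K' := by
    rw [IntermediateField.sup_toSubfield]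
    rfl
  ext x
  simp only [Set.mem_setOf_eq, SetLike.mem_coe]
  constructor
  · rintro ⟨hxKK, hxalg⟩
    have hx : x ∈ Ki ⊔ K'i := by
      rw [← SetLike.mem_coe, ← IntermediateField.coe_toSubfield, hsub]; exact hxKK
    have hxint : IsIntegral ↥F x := hxalg.isIntegral
    obtain ⟨α, hαmem, hα⟩ := exists_adjoin_simple_eq K'i
    haveI : FiniteDimensional ↥F ↥((↥F)⟮x⟯) := IntermediateField.adjoin.finiteDimensional hxint
    set L := K'i ⊔ (↥F)⟮x⟯ with hL
    haveI : FiniteDimensional ↥F ↥L := IntermediateField.finiteDimensional_sup _ _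
    obtain ⟨β, hβmem, hβ⟩ := exists_adjoin_simple_eq L
    have hαint : IsIntegral ↥F α :=
      IntermediateField.isIntegral_iff.mp (IsIntegral.of_finite ↥F (⟨α, hαmem⟩ : K'i))
    have hβint : IsIntegral ↥F β :=
      IntermediateField.isIntegral_iff.mp (IsIntegral.of_finite ↥F (⟨β, hβmem⟩ : L))
    have hLle : L ≤ Ki ⊔ K'i :=
      sup_le le_sup_right ((IntermediateField.adjoin_simple_le_iff).mpr hx)
    have hKab : (↥Ki)⟮α⟯ = (↥Ki)⟮β⟯ := by
      apply le_antisymm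
      · rw [IntermediateField.adjoin_simple_le_iff]
        have h1 : α ∈ Ki ⊔ (↥F)⟮β⟯ := by
          rw [hβ]
          exact SetLike.le_def.mp le_sup_right (SetLike.le_def.mp le_sup_left hαmem)
        rw [← IntermediateField.restrictScalars_adjoin_eq_sup] at h1
        exact h1
      · rw [IntermediateField.adjoin_simple_le_iff]
        have h1 : β ∈ Ki ⊔ (↥F)⟮α⟯ := by
          rw [hα]
          exact SetLike.le_def.mp hLle hβmem
        rw [← IntermediateField.restrictScalars_adjoin_eq_sup] at h1
        exact h1
    have hchain : Module.finrank ↥F ↥K'i = Module.finrank ↥F ↥L := by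
      calc Module.finrank ↥F ↥K'i
          = Module.finrank ↥F ↥((↥F)⟮α⟯) := by rw [hα]
        _ = (minpoly ↥F α).natDegree := IntermediateField.adjoin.finrank hαint
        _ = (minpoly ↥Ki α).natDegree :=
            (natDegree_minpoly_eq_of_relAlgClosed Ki halgc' α hαint).symm
        _ = Module.finrank ↥Ki ↥((↥Ki)⟮α⟯) := (IntermediateField.adjoin.finrank hαint.tower_top).symm
        _ = Module.finrank ↥Ki ↥((↥Ki)⟮β⟯) := by rw [hKab]
        _ = (minpoly ↥Ki β).natDegree := IntermediateField.adjoin.finrank hβint.tower_top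
        _ = (minpoly ↥F β).natDegree := natDegree_minpoly_eq_of_relAlgClosed Ki halgc' β hβint
        _ = Module.finrank ↥F ↥((↥F)⟮β⟯) := (IntermediateField.adjoin.finrank hβint).symm
        _ = Module.finrank ↥F ↥L := by rw [hβ]
    have hKL : K'i = L :=
      IntermediateField.eq_of_le_of_finrank_le le_sup_left (le_of_eq hchain.symm)
    have hxL : x ∈ L :=
      SetLike.le_def.mp le_sup_right (IntermediateField.mem_adjoin_simple_self ↥F x)
    rw [← hKL] at hxL
    exact hxL
  · intro hx
    refine ⟨SetLike.le_def.mp le_sup_right hx, ?_⟩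
    have : IsIntegral ↥F (⟨x, hx⟩ : K'i) := IsIntegral.of_finite ↥F _
    exact (IntermediateField.isIntegral_iff.mp this).isAlgebraic
end

section
/- Let k be a field of characteristic p > 0 and let k((X)) be the field of formal Laurent series over k. Then the maximal perfect subfield of k((X)) equals the maximal perfect subfield of k, viewed inside k((X)) via the constant series; that is, (k((X)))^{p^∞} = k^{p^∞}. Concretely, if f = Σ_{n ≫ -∞} a_n X^n ∈ k((X)) lies in (k((X)))^{p^m} for every m ∈ ℕ, then a_n = 0 for all n ≠ 0 and a_0 ∈ k^{p^∞}. -/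
private lemma leadingCoeff_pow_aux {k : Type*} [Field k] (x : LaurentSeries k) (n : ℕ) :
    (x ^ n).leadingCoeff = x.leadingCoeff ^ n := by
  rcases eq_or_ne x 0 with rfl | hx
  · rcases n with _ | n
    · simp
    · rw [zero_pow (Nat.succ_ne_zero n), pow_succ, HahnSeries.leadingCoeff_zero, mul_zero]
  · induction n with
    | zero => simp [HahnSeries.leadingCoeff_one]
    | succ n ih =>
      rw [pow_succ, HahnSeries.leadingCoeff_eq,
        HahnSeries.order_mul (pow_ne_zero n hx) hx,
        HahnSeries.coeff_mul_order_add_order, ih, pow_succ]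


/-- **Example 1.6** (key fact): for a field `k` of characteristic `p > 0`, the maximal perfect
subfield of the Laurent series field `k((X))` equals the maximal perfect subfield of `k`,
viewed inside `k((X))` via the constant-series embedding `C`.  Concretely, if
`f ∈ k((X))` is a `pᵐ`-th power for every `m`, then its coefficients `aₙ` vanish for all
`n ≠ 0` and `a₀ ∈ k^{p^∞}`. -/
theorem maximalPerfectSubfield_laurentSeries (p : ℕ) [Fact p.Prime]
    (k : Type*) [Field k] [CharP k p] :
    letI : CharP (LaurentSeries k) p :=
      charP_of_injective_ringHom (f := (HahnSeries.C : k →+* LaurentSeries k))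
        HahnSeries.C_injective p
    maximalPerfectSubfield p (LaurentSeries k)
        = (maximalPerfectSubfield p k).map (HahnSeries.C : k →+* LaurentSeries k) ∧
      ∀ f : LaurentSeries k, (∀ m : ℕ, ∃ g : LaurentSeries k, g ^ p ^ m = f) →
        (∀ n : ℤ, n ≠ 0 → f.coeff n = 0) ∧ ∀ m : ℕ, ∃ a : k, a ^ p ^ m = f.coeff 0 := by
  letI : CharP (LaurentSeries k) p :=
    charP_of_injective_ringHom (f := (HahnSeries.C : k →+* LaurentSeries k))
      HahnSeries.C_injective p
  have hp : p.Prime := Fact.out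
  -- Step 1: anything that is a `p^m`-th power for all `m` and is nonzero has order 0.
  have horder : ∀ h : LaurentSeries k, h ≠ 0 →
      (∀ m : ℕ, ∃ g : LaurentSeries k, g ^ p ^ m = h) → h.order = 0 := by
    intro h hne hh
    by_contra h0
    obtain ⟨m, hm⟩ := pow_unbounded_of_one_lt (h.order.natAbs) hp.one_lt
    obtain ⟨g, hg⟩ := hh m
    have hgne : g ≠ 0 := by
      rintro rfl
      exact hne (by rw [← hg, zero_pow (pow_ne_zero m hp.ne_zero)])
    have hord : h.order = (p ^ m : ℕ) • g.order := by
      rw [← hg, HahnSeries.order_pow]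
    have hgo : g.order ≠ 0 := by
      intro hz
      rw [hz, smul_zero] at hord
      exact h0 hord
    have : (p ^ m : ℕ) ≤ h.order.natAbs := by
      rw [hord, nsmul_eq_mul]
      rw [Int.natAbs_mul, Int.natAbs_natCast]
      exact Nat.le_mul_of_pos_right _ (Int.natAbs_pos.mpr hgo)
    omega
  -- Step 2: the concrete statement about coefficients.
  have key : ∀ f : LaurentSeries k, (∀ m : ℕ, ∃ g : LaurentSeries k, g ^ p ^ m = f) →
      (∀ n : ℤ, n ≠ 0 → f.coeff n = 0) ∧ ∀ m : ℕ, ∃ a : k, a ^ p ^ m = f.coeff 0 := by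
    intro f hf
    rcases eq_or_ne f 0 with rfl | hfne
    · exact ⟨fun n _ => rfl, fun m => ⟨0, by
        rw [zero_pow (pow_ne_zero m hp.ne_zero)]; rfl⟩⟩
    have hford : f.order = 0 := horder f hfne hf
    -- the coefficient-0 part
    have hcoeff0 : ∀ m : ℕ, ∃ a : k, a ^ p ^ m = f.coeff 0 := by
      intro m
      obtain ⟨g, hg⟩ := hf m
      have hgne : g ≠ 0 := by
        rintro rfl
        exact hfne (by rw [← hg, zero_pow (pow_ne_zero m hp.ne_zero)])
      have hgo : g.order = 0 := by
        have : f.order = (p ^ m : ℕ) • g.order := by rw [← hg, HahnSeries.order_pow]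
        rw [hford] at this
        have hpm : ((p : ℤ) ^ m) ≠ 0 := pow_ne_zero m (by exact_mod_cast hp.ne_zero)
        have := this.symm
        rw [nsmul_eq_mul] at this
        push_cast at this
        exact (mul_eq_zero.mp this).resolve_left hpm
      refine ⟨g.leadingCoeff, ?_⟩
      have : (g ^ p ^ m).leadingCoeff = g.leadingCoeff ^ p ^ m := leadingCoeff_pow_aux g _
      rw [hg, HahnSeries.leadingCoeff_eq, hford] at this
      exact this.symm
    refine ⟨?_, hcoeff0⟩
    -- the vanishing part: consider h = f - C (f.coeff 0)
    set h : LaurentSeries k := f - HahnSeries.C (f.coeff 0) with hh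
    have hhcoeff : ∀ n : ℤ, h.coeff n = f.coeff n - if n = 0 then f.coeff 0 else 0 := by
      intro n
      simp only [hh, HahnSeries.coeff_sub, HahnSeries.C_apply, HahnSeries.coeff_single]
      split_ifs <;> rfl
    have hzero : h = 0 := by
      by_contra hne
      have hpow : ∀ m : ℕ, ∃ g : LaurentSeries k, g ^ p ^ m = h := by
        intro m
        obtain ⟨g, hg⟩ := hf m
        obtain ⟨a, ha⟩ := hcoeff0 m
        refine ⟨g - HahnSeries.C a, ?_⟩
        rw [sub_pow_char_pow, hg, ← map_pow, ha]
      have h0 : h.order = 0 := horder h hne hpow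
      have : h.coeff h.order ≠ 0 := by
        rw [← HahnSeries.leadingCoeff_eq]
        exact HahnSeries.leadingCoeff_ne_zero.mpr hne
      rw [h0, hhcoeff 0] at this
      simp at this
    intro n hn
    have := hhcoeff n
    rw [hzero] at this
    simp only [HahnSeries.coeff_zero, if_neg hn, sub_zero] at this
    exact this.symm
  refine ⟨?_, key⟩
  -- Step 3: the subfield equality.
  ext x
  simp only [maximalPerfectSubfield, Subfield.mem_iInf, RingHom.mem_fieldRange,
    Subfield.mem_map, iterateFrobenius_def]
  constructor
  · intro hx
    have hx' : ∀ m : ℕ, ∃ g : LaurentSeries k, g ^ p ^ m = x := hx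
    obtain ⟨hvan, hc0⟩ := key x hx'
    refine ⟨x.coeff 0, by simpa [maximalPerfectSubfield, Subfield.mem_iInf,
      RingHom.mem_fieldRange, iterateFrobenius_def] using hc0, ?_⟩
    ext n
    rw [HahnSeries.C_apply, HahnSeries.coeff_single]
    split_ifs with hn0
    · subst hn0; rfl
    · exact (hvan n hn0).symm
  · rintro ⟨a, ha, rfl⟩ n
    obtain ⟨b, hb⟩ := ha n
    exact ⟨HahnSeries.C b, by rw [← map_pow, hb]⟩
end

section
/- Let p be a prime, E a field of characteristic 0, r ∈ ℕ with r ≥ 1, n ∈ ℕ with n ≥ 1, I an index set, and (n_i)_{i∈I} ∈ ℕ^I. Let U^{(n)} := 1 + p^n ℤ_p, the subgroup of ℤ_p^× of units congruent to 1 modulo p^n, let A := Π_{i∈I} p^{n_i}ℤ_p (a product of additive subgroups of ℤ_p), and form the semidirect product G := U^{(n)} ⋉ A, where U^{(n)} acts on A by componentwise scalar multiplication. Let ρ : G → GL_r(E) be a group homomorphism whose kernel contains an open subgroup of U^{(n)} × {0}, i.e. there exists m ≥ n such that ρ(u, 0) = 1 for all u ∈ 1 + p^m ℤ_p. Then the image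 of ρ is finite. -/
/-- The subgroup `1 + pⁿℤ_p` of `ℤ_pˣ`. -/
def unitsOnePlusPPow (p n : ℕ) [Fact p.Prime] : Subgroup ℤ_[p]ˣ where
  carrier := {u | ∃ a : ℤ_[p], (u : ℤ_[p]) = 1 + (p : ℤ_[p]) ^ n * a}
  one_mem' := ⟨0, by simp⟩
  mul_mem' := by
    rintro x y ⟨a, ha⟩ ⟨b, hb⟩
    exact ⟨a + b + (p : ℤ_[p]) ^ n * a * b, by rw [Units.val_mul, ha, hb]; ring⟩
  inv_mem' := by
    rintro x ⟨a, ha⟩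
    refine ⟨-a * ↑x⁻¹, ?_⟩
    have hx : (↑x : ℤ_[p]) * ↑x⁻¹ = 1 := x.mul_inv
    linear_combination hx - (↑x⁻¹ : ℤ_[p]) * ha

/-- The product `Π_{i ∈ I} p^{n_i}ℤ_p` of additive subgroups of `ℤ_p`. -/
abbrev PiPPowZp (p : ℕ) [Fact p.Prime] (I : Type*) (ni : I → ℕ) : Type _ :=
  Π i : I, ↥(Ideal.span {(p : ℤ_[p]) ^ ni i})

/-- Componentwise multiplication by a unit of `ℤ_p`, as an additive automorphism
of `Π_{i ∈ I} p^{n_i}ℤ_p`. -/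
noncomputable def unitSMulAddAut (p : ℕ) [Fact p.Prime] (I : Type*) (ni : I → ℕ)
    (u : ℤ_[p]ˣ) : PiPPowZp p I ni ≃+ PiPPowZp p I ni where
  toFun a := fun i => ⟨(u : ℤ_[p]) * ↑(a i), Ideal.mul_mem_left _ _ (a i).2⟩
  invFun a := fun i => ⟨((u⁻¹ : ℤ_[p]ˣ) : ℤ_[p]) * ↑(a i), Ideal.mul_mem_left _ _ (a i).2⟩
  left_inv a := by
    funext i
    apply Subtype.ext
    show ((u⁻¹ : ℤ_[p]ˣ) : ℤ_[p]) * ((u : ℤ_[p]) * ↑(a i)) = ↑(a i)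
    rw [← mul_assoc, Units.inv_mul, one_mul]
  right_inv a := by
    funext i
    apply Subtype.ext
    show (u : ℤ_[p]) * (((u⁻¹ : ℤ_[p]ˣ) : ℤ_[p]) * ↑(a i)) = ↑(a i)
    rw [← mul_assoc, Units.mul_inv, one_mul]
  map_add' a b := by
    funext i
    apply Subtype.ext
    show (u : ℤ_[p]) * (↑(a i) + ↑(b i)) = (u : ℤ_[p]) * ↑(a i) + (u : ℤ_[p]) * ↑(b i)
    ring

/-- The action of `1 + pⁿℤ_p ⊆ ℤ_pˣ` on `Π_{i ∈ I} p^{n_i}ℤ_p` by componentwise scalar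
multiplication, packaged for the semidirect product. -/
noncomputable def padicScalarAction (p n : ℕ) [Fact p.Prime] (I : Type*) (ni : I → ℕ) :
    unitsOnePlusPPow p n →* MulAut (Multiplicative (PiPPowZp p I ni)) where
  toFun u := AddEquiv.toMultiplicative (unitSMulAddAut p I ni (u : ℤ_[p]ˣ))
  map_one' := by
    refine DFunLike.ext _ _ fun a => funext fun i => Subtype.ext ?_
    show ((((1 : unitsOnePlusPPow p n) : ℤ_[p]ˣ)) : ℤ_[p]) * ↑(a i) = ↑(a i)
    simp
  map_mul' u v := by
    refine DFunLike.ext _ _ fun a => funext fun i => Subtype.ext ?_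
    show ((((u * v : unitsOnePlusPPow p n) : ℤ_[p]ˣ)) : ℤ_[p]) * ↑(a i)
        = ((u : ℤ_[p]ˣ) : ℤ_[p]) * (((v : ℤ_[p]ˣ) : ℤ_[p]) * ↑(a i))
    simp [mul_assoc]

open Polynomial in
/-- Roots of `X^N - 1` in a commutative artinian ring with `N` invertible form a finite set. -/
lemma aux_roots_finite {S : Type*} [CommRing S] [IsArtinianRing S] {N : ℕ} (hN0 : 0 < N)
    (hN : IsUnit (N : S)) : {s : S | s ^ N = 1}.Finite := by
  classical
  have key : ∀ a ∈ {s : S | s ^ N = 1}, ∀ b ∈ {s : S | s ^ N = 1},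
      IsNilpotent (a - b) → a = b := by
    intro a ha b hb hd
    simp only [Set.mem_setOf_eq] at ha hb
    have hbu : IsUnit b := IsUnit.of_mul_eq_one (b ^ (N - 1)) (by
      rw [← pow_succ', Nat.sub_add_cancel hN0, hb])
    have hsum : ∑ i ∈ Finset.range N, (a ^ i - b ^ i) * b ^ (N - 1 - i)
        = (∑ i ∈ Finset.range N, a ^ i * b ^ (N - 1 - i)) - (N : S) * b ^ (N - 1) := by
      have h1 : ∀ i ∈ Finset.range N,
          (a ^ i - b ^ i) * b ^ (N - 1 - i) = a ^ i * b ^ (N - 1 - i) - b ^ (N - 1) := by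
        intro i hi
        rw [Finset.mem_range] at hi
        rw [sub_mul, ← pow_add, (by omega : i + (N - 1 - i) = N - 1)]
      rw [Finset.sum_congr rfl h1, Finset.sum_sub_distrib, Finset.sum_const,
        Finset.card_range, nsmul_eq_mul]
    have hdvd : (a - b) ∣ (∑ i ∈ Finset.range N, a ^ i * b ^ (N - 1 - i)) - (N : S) * b ^ (N-1) := by
      rw [← hsum]
      exact Finset.dvd_sum fun i _ => dvd_mul_of_dvd_left (sub_dvd_pow_sub_pow a b i) _
    have hnil2 : IsNilpotent
        ((∑ i ∈ Finset.range N, a ^ i * b ^ (N - 1 - i)) - (N : S) * b ^ (N-1)) := by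
      obtain ⟨c, hc⟩ := hdvd
      rw [hc]
      exact (Commute.all _ c).isNilpotent_mul_right hd
    have hTu : IsUnit (∑ i ∈ Finset.range N, a ^ i * b ^ (N - 1 - i)) := by
      have h1 : IsUnit ((N : S) * b ^ (N - 1)) := hN.mul (hbu.pow _)
      have h2 := hnil2.isUnit_add_right_of_commute h1 (Commute.all _ _)
      rwa [sub_add_cancel] at h2
    have h0 : (∑ i ∈ Finset.range N, a ^ i * b ^ (N - 1 - i)) * (a - b) = 0 := by
      rw [geom_sum₂_mul, ha, hb, sub_self]
    have := (hTu.mul_right_eq_zero).mp h0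
    exact sub_eq_zero.mp this
  haveI : Finite {I : Ideal S | I.IsMaximal} := (IsArtinianRing.setOfPred_isMaximal_finite S).to_subtype
  set π : S →+* ∀ I : {I : Ideal S | I.IsMaximal}, S ⧸ I.1 :=
    Pi.ringHom fun I => Ideal.Quotient.mk I.1 with hπ
  have hker : ∀ x : S, π x = 0 → IsNilpotent x := by
    intro x hx
    have hx' : x ∈ Ideal.jacobson (⊥ : Ideal S) := by
      rw [Ideal.jacobson]
      refine Ideal.mem_sInf.mpr ?_
      rintro J ⟨-, hJ⟩
      exact Ideal.Quotient.eq_zero_iff_mem.mp (congrFun hx ⟨J, hJ⟩)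
    obtain ⟨k, hk⟩ := IsArtinianRing.isNilpotent_jacobson_bot (R := S)
    refine ⟨k, ?_⟩
    have h2 := Ideal.pow_mem_pow hx' k
    rw [hk] at h2
    simpa using h2
  have hQfin : {q : ∀ I : {I : Ideal S | I.IsMaximal}, S ⧸ I.1 | q ^ N = 1}.Finite := by
    have hsub : {q : ∀ I : {I : Ideal S | I.IsMaximal}, S ⧸ I.1 | q ^ N = 1}
        ⊆ Set.pi Set.univ fun I => {x : S ⧸ I.1 | x ^ N = 1} := by
      intro q hq
      rw [Set.mem_pi]
      intro I _
      have := congrFun hq I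
      simpa using this
    refine Set.Finite.subset (Set.Finite.pi fun I => ?_) hsub
    letI : Field (S ⧸ I.1) := @Ideal.Quotient.field _ _ I.1 I.2
    refine Set.Finite.subset (Polynomial.finite_setOf_isRoot
      (Polynomial.X_pow_sub_C_ne_zero hN0 (1 : S ⧸ I.1))) ?_
    intro x hx
    simp only [Set.mem_setOf_eq] at hx ⊢
    simp [Polynomial.IsRoot, hx]
  refine Set.Finite.of_finite_image (f := π) (hQfin.subset ?_) ?_
  · rintro - ⟨s, hs, rfl⟩
    simp only [Set.mem_setOf_eq] at hs ⊢
    rw [← map_pow, hs, map_one]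
  · intro a ha b hb hab
    exact key a ha b hb (hker (a - b) (by rw [map_sub, hab, sub_self]))

/-- If `f` factors through a finite type, its range is finite. -/
lemma aux_finite_range {α β γ : Type*} [Finite γ] (f : α → β) (g : α → γ)
    (h : ∀ a b, g a = g b → f a = f b) : (Set.range f).Finite := by
  cases isEmpty_or_nonempty α with
  | inl hα => simp [Set.range_eq_empty]
  | inr hα =>
    classical
    have hsub : Set.range f ⊆ Set.range
        (fun c : γ => if hc : ∃ a, g a = c then f hc.choose else f (Classical.arbitrary α)) := by
      rintro - ⟨a, rfl⟩
      refine ⟨g a, ?_⟩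
      have hc : ∃ a', g a' = g a := ⟨a, rfl⟩
      simp only [dif_pos hc]
      exact h _ _ hc.choose_spec
    exact (Set.finite_range _).subset hsub


open SemidirectProduct Pointwise

/-- **Lemma 2.2**: let `p` be a prime, `E` a field of characteristic `0`, `r ≥ 1`, `n ≥ 1`,
`I` an index set and `(n_i)_{i∈I} ∈ ℕ^I`.  Let `G = U^{(n)} ⋉ Π_{i∈I} p^{n_i}ℤ_p`, where
`U^{(n)} = 1 + pⁿℤ_p` acts by componentwise scalar multiplication.  If
`ρ : G → GL_r(E)` is a group homomorphism whose kernel contains an open subgroup of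
`U^{(n)} × {0}` (i.e. there is `m ≥ n` with `ρ(u,0) = 1` for all `u ∈ 1 + pᵐℤ_p`),
then the image of `ρ` is finite. -/

theorem finite_image_of_kernel_contains_open_subgroup
    (p : ℕ) [Fact p.Prime] (E : Type*) [Field E] [CharZero E]
    (r : ℕ) (hr : 1 ≤ r) (n : ℕ) (hn : 1 ≤ n) (I : Type*) (ni : I → ℕ)
    (ρ : SemidirectProduct (Multiplicative (PiPPowZp p I ni)) (unitsOnePlusPPow p n)
        (padicScalarAction p n I ni) →* Matrix.GeneralLinearGroup (Fin r) E)
    (hker : ∃ m : ℕ, n ≤ m ∧ ∀ u : unitsOnePlusPPow p n,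
        (u : ℤ_[p]ˣ) ∈ unitsOnePlusPPow p m → ρ (SemidirectProduct.inr u) = 1) :
    (Set.range ρ).Finite := by

  classical
  obtain ⟨m, hm, hker⟩ := hker
  have hpp : p.Prime := Fact.out
  -- the unit 1 + p^m
  have hunit : IsUnit (1 + (p : ℤ_[p]) ^ m) := by
    by_contra h
    have hpmem : ((p : ℤ_[p])) ^ m ∈ IsLocalRing.maximalIdeal ℤ_[p] := by
      rw [PadicInt.maximalIdeal_eq_span_p]
      exact Ideal.mem_span_singleton.mpr (dvd_pow_self _ (by omega))
    have h1 : (1 + (p : ℤ_[p]) ^ m) ∈ IsLocalRing.maximalIdeal ℤ_[p] :=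
      (IsLocalRing.mem_maximalIdeal _).mpr (mem_nonunits_iff.mpr h)
    have h2 : (1 : ℤ_[p]) ∈ IsLocalRing.maximalIdeal ℤ_[p] := by
      have := Ideal.sub_mem _ h1 hpmem
      simpa using this
    exact (IsLocalRing.maximalIdeal.isMaximal ℤ_[p]).ne_top
      (Ideal.eq_top_of_isUnit_mem _ h2 isUnit_one)
  set u₀ : ℤ_[p]ˣ := hunit.unit with hu₀def
  have hu₀ : (u₀ : ℤ_[p]) = 1 + (p : ℤ_[p]) ^ m := hunit.unit_spec
  have memn : u₀ ∈ unitsOnePlusPPow p n := by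
    refine ⟨(p : ℤ_[p]) ^ (m - n), ?_⟩
    rw [hu₀, ← pow_add, (by omega : n + (m - n) = m)]
  have memm : u₀ ∈ unitsOnePlusPPow p m := ⟨1, by rw [hu₀, mul_one]⟩
  set U : unitsOnePlusPPow p n := ⟨u₀, memn⟩ with hUdef
  have hU1 : ρ (inr U) = 1 := hker U memm
  set N := p ^ m with hNdef
  have hN0 : 0 < N := pow_pos hpp.pos m
  -- component formula for powers
  have hpow : ∀ (k : ℕ) (a : Multiplicative (PiPPowZp p I ni)) (i : I),
      (((a ^ k) i : ℤ_[p])) = (k : ℤ_[p]) * ↑(a i) := by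
    intro k a i
    induction k with
    | zero =>
      rw [pow_zero]
      show ((0 : ↥(Ideal.span {(p : ℤ_[p]) ^ ni i})) : ℤ_[p]) = _
      simp
    | succ k ih =>
      rw [pow_succ]
      show (((a ^ k) i : ℤ_[p])) + ↑(a i) = _
      rw [ih]
      push_cast
      ring
  -- conjugation formula
  have key : ∀ a : Multiplicative (PiPPowZp p I ni),
      (padicScalarAction p n I ni) U a = a * a ^ N := by
    intro a
    funext i
    apply Subtype.ext
    show ((U : ℤ_[p]ˣ) : ℤ_[p]) * ↑(a i) = ((a * a ^ N) i : ℤ_[p])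
    have h2 : ((a * a ^ N) i : ℤ_[p]) = ↑(a i) + ↑((a ^ N) i) := rfl
    rw [h2, hpow]
    show ((u₀ : ℤ_[p])) * ↑(a i) = _
    rw [hu₀, hNdef]
    push_cast
    ring
  -- every ρ(inl a) has order dividing N
  have hexp : ∀ a : Multiplicative (PiPPowZp p I ni), ρ (inl a) ^ N = 1 := by
    intro a
    have h3 : ρ (inl ((padicScalarAction p n I ni) U a)) = ρ (inl a) := by
      rw [inl_aut]
      simp [hU1]
    rw [key, map_mul, map_mul] at h3
    have h4 : ρ (inl (a ^ N)) = 1 := mul_eq_left.mp h3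
    rw [← map_pow, ← map_pow]
    exact h4
  -- the set of matrices coming from inl
  set T : Set (Matrix (Fin r) (Fin r) E) :=
    Set.range fun a : Multiplicative (PiPPowZp p I ni) =>
      ((ρ (inl a) : Matrix.GeneralLinearGroup (Fin r) E) : Matrix (Fin r) (Fin r) E) with hTdef
  have hcommT : ∀ x ∈ T, ∀ y ∈ T, x * y = y * x := by
    rintro - ⟨a, rfl⟩ - ⟨b, rfl⟩
    have h5 : ρ (inl a) * ρ (inl b) = ρ (inl b) * ρ (inl a) := by
      rw [← map_mul, ← map_mul, ← map_mul, ← map_mul, mul_comm a b]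
    rw [← Units.val_mul, ← Units.val_mul, h5]
  set S : Subalgebra E (Matrix (Fin r) (Fin r) E) := Algebra.adjoin E T with hSdef
  letI : CommRing ↥S := Algebra.adjoinCommRingOfComm E hcommT
  haveI : IsArtinianRing ↥S := IsArtinianRing.of_finite E ↥S
  have hNunit : IsUnit ((N : ℕ) : ↥S) := by
    have h1 : ((N : ℕ) : E) ≠ 0 := Nat.cast_ne_zero.mpr hN0.ne'
    have h2 := (isUnit_iff_ne_zero.mpr h1).map (algebraMap E ↥S)
    rwa [map_natCast] at h2
  have hroots : {s : ↥S | s ^ N = 1}.Finite := aux_roots_finite hN0 hNunit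
  have hTfin : T.Finite := by
    refine Set.Finite.subset (hroots.image Subtype.val) ?_
    rintro - ⟨a, rfl⟩
    have hmem : ((ρ (inl a) : Matrix.GeneralLinearGroup (Fin r) E) : Matrix (Fin r) (Fin r) E)
        ∈ S := Algebra.subset_adjoin ⟨a, rfl⟩
    refine ⟨⟨_, hmem⟩, ?_, rfl⟩
    have hx : ((ρ (inl a) : Matrix.GeneralLinearGroup (Fin r) E)
        : Matrix (Fin r) (Fin r) E) ^ N = 1 := by
      rw [← Units.val_pow_eq_pow_val, hexp a, Units.val_one]
    show (⟨_, hmem⟩ : ↥S) ^ N = 1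
    apply Subtype.ext
    rw [SubmonoidClass.coe_pow]
    exact hx
  have hinl_fin : (Set.range fun a : Multiplicative (PiPPowZp p I ni) => ρ (inl a)).Finite := by
    refine Set.Finite.of_finite_image
      (f := fun g : Matrix.GeneralLinearGroup (Fin r) E => (g : Matrix (Fin r) (Fin r) E))
      ?_ fun x _ y _ h => Units.ext h
    rw [← Set.range_comp]
    exact hTfin
  -- finiteness of the image of inr
  haveI : NeZero N := ⟨hN0.ne'⟩
  have hinr_fin : (Set.range fun u : unitsOnePlusPPow p n => ρ (inr u)).Finite := by
    refine aux_finite_range _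
      (fun u : unitsOnePlusPPow p n => PadicInt.toZModPow m ((u : ℤ_[p]ˣ) : ℤ_[p])) ?_
    intro u v huv
    have hdvd : (p : ℤ_[p]) ^ m ∣ (((u : ℤ_[p]ˣ) : ℤ_[p]) - ((v : ℤ_[p]ˣ) : ℤ_[p])) := by
      have h6 : PadicInt.toZModPow m (((u : ℤ_[p]ˣ) : ℤ_[p]) - ((v : ℤ_[p]ˣ) : ℤ_[p])) = 0 := by
        rw [map_sub, sub_eq_zero]
        exact huv
      have h7 := RingHom.mem_ker.mpr h6
      rw [PadicInt.ker_toZModPow] at h7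
      exact Ideal.mem_span_singleton.mp h7
    obtain ⟨t, ht⟩ := hdvd
    have hwmem : ((u * v⁻¹ : unitsOnePlusPPow p n) : ℤ_[p]ˣ) ∈ unitsOnePlusPPow p m := by
      refine ⟨t * (((v : ℤ_[p]ˣ)⁻¹ : ℤ_[p]ˣ) : ℤ_[p]), ?_⟩
      have hv : ((v : ℤ_[p]ˣ) : ℤ_[p]) * (((v : ℤ_[p]ˣ)⁻¹ : ℤ_[p]ˣ) : ℤ_[p]) = 1 :=
        Units.mul_inv _
      show ((u : ℤ_[p]ˣ) : ℤ_[p]) * (((v : ℤ_[p]ˣ)⁻¹ : ℤ_[p]ˣ) : ℤ_[p]) = _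
      linear_combination ((((v : ℤ_[p]ˣ)⁻¹ : ℤ_[p]ˣ) : ℤ_[p])) * ht + hv
    have h8 : ρ (inr (u * v⁻¹)) = 1 := hker _ hwmem
    rw [map_mul, map_inv, map_mul, map_inv] at h8
    exact mul_inv_eq_one.mp h8
  -- assemble
  have hsub : Set.range ρ ⊆ (Set.range fun a : Multiplicative (PiPPowZp p I ni) => ρ (inl a))
      * (Set.range fun u : unitsOnePlusPPow p n => ρ (inr u)) := by
    rintro - ⟨g, rfl⟩
    refine ⟨ρ (inl g.left), ⟨g.left, rfl⟩, ρ (inr g.right), ⟨g.right, rfl⟩, ?_⟩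
    show ρ (inl g.left) * ρ (inr g.right) = ρ g
    rw [← map_mul, inl_left_mul_inr_right]
  exact (hinl_fin.mul hinr_fin).subset hsub
end

section
/- Let B be a field and G a group acting on B by ring automorphisms, and let M be a finite-dimensional B-vector space equipped with an action of G by additive automorphisms that is semilinear, i.e. g·(b·m) = (g·b)·(g·m) for all g ∈ G, b ∈ B, m ∈ M. Let B^G be the fixed field and M^G the set of G-fixed vectors, a B^G-subspace of M. Then the canonical B-linear map B ⊗_{B^G} M^G → M is injective; in particular dim_{B^G} M^G ≤ dim_B M. Equivalently, any family of elements of M^G that is linearly independent over B^G is linearly independent over B. -/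
open scoped TensorProduct

variable (B : Type*) [Field B] (G : Type*) [Group G] [MulSemiringAction G B]
variable (M : Type*) [AddCommGroup M] [Module B M] [DistribMulAction G M]

/-- The fixed points `M^G`, as a submodule over the fixed field `B^G`; this requires the
`G`-action on `M` to be semilinear over the `G`-action on `B`. -/
def fixedPointsSubmodule
    (hsemi : ∀ (g : G) (b : B) (m : M), g • (b • m) = (g • b) • (g • m)) :
    Submodule (FixedPoints.subfield G B) M where
  carrier := {m : M | ∀ g : G, g • m = m}
  add_mem' := fun {a b} ha hb g => by rw [smul_add, ha g, hb g]
  zero_mem' := fun g => smul_zero g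
  smul_mem' := fun c m hm g => by
    show g • ((c : B) • m) = (c : B) • m
    rw [hsemi g (c : B) m, hm g, c.2 g]

/-- The canonical `B^G`-linear map `B ⊗_{B^G} M^G → M`, `b ⊗ m ↦ b • m`. -/
noncomputable def canonicalTensorMap
    (hsemi : ∀ (g : G) (b : B) (m : M), g • (b • m) = (g • b) • (g • m)) :
    B ⊗[FixedPoints.subfield G B] (fixedPointsSubmodule B G M hsemi) →ₗ[FixedPoints.subfield G B] M :=
  TensorProduct.lift
    { toFun := fun b =>
        { toFun := fun m => b • (m : M)
          map_add' := fun m m' => by simp [smul_add]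
          map_smul' := fun c m => by
            show b • ((c : B) • (m : M)) = (c : B) • (b • (m : M))
            rw [smul_comm] }
      map_add' := fun b b' => by
        ext m; show (b + b') • (m : M) = b • (m : M) + b' • (m : M); rw [add_smul]
      map_smul' := fun c b => by
        ext m
        show ((c : B) * b) • (m : M) = (c : B) • (b • (m : M))
        rw [mul_smul] }

theorem li_aux (B : Type*) [Field B] (G : Type*) [Group G]
    [MulSemiringAction G B] (M : Type*) [AddCommGroup M] [Module B M] [DistribMulAction G M]
    (hsemi : ∀ (g : G) (b : B) (m : M), g • (b • m) = (g • b) • (g • m))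
    (ι : Type*) (v : ι → M) (hv : ∀ (i : ι) (g : G), g • v i = v i)
    (hLI : LinearIndependent (FixedPoints.subfield G B) v) : LinearIndependent B v := by
  classical
  rw [linearIndependent_iff'] at hLI ⊢
  intro s
  induction s using Finset.strongInduction with
  | _ s ih =>
    intro f hf
    by_contra hcon
    push_neg at hcon
    obtain ⟨j, hjs, hj⟩ := hcon
    set f' : ι → B := fun i => (f j)⁻¹ * f i with hf'def
    have hf'j : f' j = 1 := inv_mul_cancel₀ hj
    have hsum' : ∑ i ∈ s, f' i • v i = 0 := by
      simp only [hf'def, mul_smul, ← Finset.smul_sum, hf, smul_zero]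
    have hfix : ∀ i ∈ s, ∀ g : G, g • f' i = f' i := by
      intro i hi g
      have h1 : ∑ i ∈ s, (g • f' i) • v i = 0 := by
        have := congrArg (fun m => g • m) hsum'
        simp only [smul_zero, Finset.smul_sum] at this
        rw [← this]
        refine Finset.sum_congr rfl fun i hi => ?_
        rw [hsemi, hv]
      have h2 : ∑ i ∈ s, (g • f' i - f' i) • v i = 0 := by
        simp only [sub_smul, Finset.sum_sub_distrib, h1, hsum', sub_zero]
      have hjz : (g • f' j - f' j) • v j = 0 := by
        rw [hf'j, smul_one, sub_self, zero_smul]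
      have key : ∑ i ∈ s.erase j, (g • f' i - f' i) • v i = 0 := by
        rwa [Finset.sum_erase s hjz]
      rcases eq_or_ne i j with rfl | hij
      · rw [hf'j, smul_one]
      · exact sub_eq_zero.mp (ih (s.erase j) (Finset.erase_ssubset hjs) _ key i
          (Finset.mem_erase.2 ⟨hij, hi⟩))
    set F : ι → FixedPoints.subfield G B := fun i =>
      if h : i ∈ s then ⟨f' i, fun g => hfix i h g⟩ else 0 with hFdef
    have hFsum : ∑ i ∈ s, F i • v i = 0 := by
      rw [← hsum']
      refine Finset.sum_congr rfl fun i hi => ?_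
      show ((F i : B)) • v i = f' i • v i
      rw [hFdef]
      simp [hi]
    have := hLI s F hFsum j hjs
    rw [hFdef] at this
    simp only [hjs, dif_pos] at this
    have : f' j = 0 := congrArg Subtype.val this
    rw [hf'j] at this
    exact one_ne_zero this


set_option maxHeartbeats 1000000 in
/-- **Lemma 1.13**: let `B` be a field with a group `G` acting by ring automorphisms, and let
`M` be a finite-dimensional `B`-vector space with a semilinear `G`-action.  Then the canonical
`B`-linear map `B ⊗_{B^G} M^G → M` is injective; in particular
`dim_{B^G} M^G ≤ dim_B M`.  Equivalently, any family of elements of `M^G` linearly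
independent over `B^G` is linearly independent over `B`. -/
theorem canonicalTensorMap_injective (B : Type*) [Field B] (G : Type*) [Group G]
    [MulSemiringAction G B] (M : Type*) [AddCommGroup M] [Module B M] [DistribMulAction G M]
    [FiniteDimensional B M]
    (hsemi : ∀ (g : G) (b : B) (m : M), g • (b • m) = (g • b) • (g • m)) :
    Function.Injective (canonicalTensorMap B G M hsemi) ∧
    Module.finrank (FixedPoints.subfield G B) (fixedPointsSubmodule B G M hsemi)
      ≤ Module.finrank B M ∧
    ∀ (ι : Type*) (v : ι → M), (∀ (i : ι) (g : G), g • v i = v i) →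
      LinearIndependent (FixedPoints.subfield G B) v → LinearIndependent B v := by
  classical
  set K := FixedPoints.subfield G B with hK
  set N := fixedPointsSubmodule B G M hsemi with hN
  set e := Module.Basis.ofVectorSpace K N with he
  set w : Module.Basis.ofVectorSpaceIndex K N → M := fun i => ((e i : N) : M) with hw
  have hwfix : ∀ i g, g • w i = w i := fun i g => (e i).2 g
  have hwK : LinearIndependent K w :=
    (e.linearIndependent).map' N.subtype (Submodule.ker_subtype N)
  have hwB : LinearIndependent B w := li_aux B G M hsemi _ w hwfix hwK
  set φ : (B ⊗[K] N) ≃ₗ[K] (Module.Basis.ofVectorSpaceIndex K N →₀ B) :=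
    (TensorProduct.congr (LinearEquiv.refl K B) e.repr).trans
      (TensorProduct.finsuppScalarRight K K B _) with hφ
  have key : ∀ x, canonicalTensorMap B G M hsemi x =
      Finsupp.linearCombination B w (φ x) := by
    intro x
    induction x using TensorProduct.induction_on with
    | zero => rw [map_zero, LinearEquiv.map_zero, map_zero]
    | add x y hx hy => simp only [map_add, hx, hy]
    | tmul b n =>
      rw [show φ (b ⊗ₜ n) = TensorProduct.finsuppScalarRight K K B _ (b ⊗ₜ e.repr n) from rfl]
      simp only [LinearEquiv.trans_apply, TensorProduct.congr_tmul, LinearEquiv.refl_apply,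
        TensorProduct.finsuppScalarRight_apply_tmul]
      rw [map_finsuppSum]
      have step : ∀ (i : Module.Basis.ofVectorSpaceIndex K N) (k : K),
          Finsupp.linearCombination B w (Finsupp.single i (k • b)) = b • (k • w i) := by
        intro i k
        rw [Finsupp.linearCombination_single]
        show ((k : B) * b) • w i = b • ((k : B) • w i)
        rw [mul_smul, smul_comm]
      have hc : ((e.repr n).sum fun i k =>
            Finsupp.linearCombination B w (Finsupp.single i (k • b)))
          = (e.repr n).sum fun i k => b • (k • w i) :=
        Finsupp.sum_congr fun i _ => step i _
      rw [hc, ← Finsupp.smul_sum]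
      show b • (n : M) = b • _
      congr 1
      have : N.subtype (Finsupp.linearCombination K (fun i => e i) (e.repr n)) = (n : M) := by
        rw [e.linearCombination_repr]; rfl
      rw [← this, Finsupp.linearCombination_apply, map_finsuppSum]
      rfl
  constructor
  · intro x y hxy
    rw [key, key] at hxy
    have h0 : Finsupp.linearCombination B w (φ x - φ y) = 0 := by
      rw [map_sub, hxy, sub_self]
    have := (linearIndependent_iff.mp hwB) _ h0
    have : φ x = φ y := by rwa [sub_eq_zero] at this
    exact φ.injective this
  refine ⟨?_, fun ι v hv hLI => li_aux B G M hsemi ι v hv hLI⟩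
  have hrank : Module.rank K N ≤ Module.rank B M := by
    rw [← e.mk_eq_rank'']
    exact hwB.cardinal_le_rank
  exact Cardinal.toNat_le_toNat hrank (Module.rank_lt_aleph0 B M)
end

section
/- Let R be a commutative ring, x ∈ R, and let α : M → M' be a morphism of R-modules whose kernel and cokernel are both killed by x (i.e. x·ker α = 0 and x·coker α = 0). Then for every R-module N, the kernel and cokernel of the morphism id_N ⊗ α : N ⊗_R M → N ⊗_R M' are killed by x². -/
open scoped TensorProduct

/-- Claim in the proof of **Lemma 1.8(iii)**: let `R` be a commutative ring, `x ∈ R`, and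
`α : M → M'` a morphism of `R`-modules whose kernel and cokernel are killed by `x`.  Then for
every `R`-module `N`, the kernel and cokernel of `id_N ⊗ α : N ⊗_R M → N ⊗_R M'` are killed
by `x²`. -/
theorem lTensor_ker_coker_killed_by_sq
    (R : Type*) [CommRing R] (x : R)
    (M M' : Type*) [AddCommGroup M] [AddCommGroup M'] [Module R M] [Module R M']
    (α : M →ₗ[R] M')
    (hker : ∀ m ∈ LinearMap.ker α, x • m = 0)
    (hcoker : ∀ m' : M', x • m' ∈ LinearMap.range α)
    (N : Type*) [AddCommGroup N] [Module R N] :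
    (∀ t ∈ LinearMap.ker (LinearMap.lTensor N α), x ^ 2 • t = 0) ∧
      (∀ t : N ⊗[R] M', x ^ 2 • t ∈ LinearMap.range (LinearMap.lTensor N α)) := by
  constructor
  · intro t ht
    rw [LinearMap.mem_ker] at ht
    set π := α.rangeRestrict with hπ
    -- β : M' → range α, m' ↦ x • m'
    set β : M' →ₗ[R] LinearMap.range α :=
      LinearMap.codRestrict (LinearMap.range α) (x • LinearMap.id) (fun m' => hcoker m') with hβ
    have hβα : β ∘ₗ α = x • π := by
      ext m
      rfl
    -- lTensor π (x • t) = 0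
    have h1 : LinearMap.lTensor N π (x • t) = 0 := by
      have : LinearMap.lTensor N β (LinearMap.lTensor N α t) = 0 := by
        rw [ht, map_zero]
      rw [← LinearMap.lTensor_comp_apply, hβα, LinearMap.lTensor_smul] at this
      rw [map_smul]
      exact this
    -- exactness : ker (lTensor π) = range (lTensor of kernel inclusion)
    have hexact := lTensor_exact N (LinearMap.exact_subtype_ker_map π)
      α.surjective_rangeRestrict
    obtain ⟨u, hu⟩ := (hexact (x • t)).mp h1
    -- the kernel of π is killed by x
    have hkk : LinearMap.ker π = LinearMap.ker α := LinearMap.ker_rangeRestrict α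
    have hz : (x • LinearMap.id : LinearMap.ker π →ₗ[R] LinearMap.ker π) = 0 := by
      ext k
      have hk : (k : M) ∈ LinearMap.ker α := hkk ▸ k.2
      exact hker (k : M) hk
    have hxu : x • u = 0 := by
      have : x • u = LinearMap.lTensor N (x • LinearMap.id) u := by
        rw [LinearMap.lTensor_smul, LinearMap.lTensor_id]
        rfl
      rw [this, hz, LinearMap.lTensor_zero, LinearMap.zero_apply]
    calc x ^ 2 • t = x • (x • t) := by rw [pow_two, mul_smul]
      _ = x • LinearMap.lTensor N (LinearMap.ker π).subtype u := by rw [hu]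
      _ = LinearMap.lTensor N (LinearMap.ker π).subtype (x • u) := (map_smul _ _ _).symm
      _ = 0 := by rw [hxu, map_zero]
  · intro t
    have key : ∀ t : N ⊗[R] M', x • t ∈ LinearMap.range (LinearMap.lTensor N α) := by
      intro t
      induction t with
      | zero =>
          rw [smul_zero]
          exact (LinearMap.range (LinearMap.lTensor N α)).zero_mem
      | tmul n m' =>
          obtain ⟨m, hm⟩ := hcoker m'
          exact ⟨n ⊗ₜ m, by simp [hm, TensorProduct.tmul_smul]⟩
      | add a b ha hb =>
          rw [smul_add]
          exact Submodule.add_mem _ ha hb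
    have := key t
    have h2 : x ^ 2 • t = x • (x • t) := by rw [pow_two, mul_smul]
    rw [h2]
    exact Submodule.smul_mem _ x this
end

section
/- Let R be a commutative ring, x ∈ R, and let α : M → M' be a morphism of R-modules whose kernel and cokernel are both killed by x. Then for every q ∈ ℕ with q ≥ 1, the kernel and cokernel of the induced map α^{⊗q} : M^{⊗q} → M'^{⊗q} (the q-fold tensor power of α over R) are killed by x^{2q}. -/
open scoped TensorProduct

/-- Claim in the proof of **Lemma 1.8(iii)**: let `R` be a commutative ring, `x ∈ R`, and
`α : M → M'` a morphism of `R`-modules whose kernel and cokernel are killed by `x`.  Then for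
every `q ≥ 1`, the kernel and cokernel of the induced map `α^{⊗q} : M^{⊗q} → M'^{⊗q}` on
`q`-fold tensor powers over `R` are killed by `x^(2q)`. -/
theorem tensorPower_ker_coker_killed
    (R : Type*) [CommRing R] (x : R)
    (M M' : Type*) [AddCommGroup M] [AddCommGroup M'] [Module R M] [Module R M']
    (α : M →ₗ[R] M')
    (hker : ∀ m ∈ LinearMap.ker α, x • m = 0)
    (hcoker : ∀ m' : M', x • m' ∈ LinearMap.range α)
    (q : ℕ) (hq : 1 ≤ q) :
    (∀ t ∈ LinearMap.ker (PiTensorProduct.map fun _ : Fin q => α), x ^ (2 * q) • t = 0) ∧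
      (∀ t : ⨂[R] (_ : Fin q), M',
        x ^ (2 * q) • t ∈ LinearMap.range (PiTensorProduct.map fun _ : Fin q => α)) := by
  classical
  -- well-definedness up to x
  have hwd : ∀ m₁ m₂ : M, α m₁ = α m₂ → x • m₁ = x • m₂ := by
    intro m₁ m₂ h
    have hmem : m₁ - m₂ ∈ LinearMap.ker α := by
      simp [LinearMap.mem_ker, map_sub, h]
    have := hker _ hmem
    rw [smul_sub, sub_eq_zero] at this
    exact this
  -- a choice of preimage of x • m'
  set c : M' → M := fun m' => (hcoker m').choose with hc_def
  have hc : ∀ m' : M', α (c m') = x • m' := fun m' => (hcoker m').choose_spec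
  -- the approximate inverse β
  let β : M' →ₗ[R] M :=
    { toFun := fun m' => x • c m'
      map_add' := by
        intro a b
        have : α (c (a + b)) = α (c a + c b) := by
          rw [map_add, hc, hc, hc, smul_add]
        have := hwd _ _ this
        show x • c (a + b) = x • c a + x • c b
        rw [this, smul_add]
      map_smul' := by
        intro r a
        have : α (c (r • a)) = α (r • c a) := by
          rw [map_smul, hc, hc, smul_comm]
        have := hwd _ _ this
        simp only [RingHom.id_apply]
        show x • c (r • a) = r • (x • c a)
        rw [this, smul_comm] }
  have hβα : ∀ m : M, β (α m) = (x * x) • m := by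
    intro m
    have : α (c (α m)) = α (x • m) := by rw [hc, map_smul]
    have h2 := hwd _ _ this
    show x • c (α m) = (x * x) • m
    rw [h2, smul_smul]
  have hαβ : ∀ m' : M', α (β m') = (x * x) • m' := by
    intro m'
    show α (x • c m') = (x * x) • m'
    rw [map_smul, hc, smul_smul]
  -- the composite of tensor powers is scalar multiplication by x^(2q)
  have key : ∀ t : ⨂[R] (_ : Fin q), M,
      PiTensorProduct.map (fun _ : Fin q => β)
        (PiTensorProduct.map (fun _ : Fin q => α) t) = x ^ (2 * q) • t := by
    have hmaps : (PiTensorProduct.map (fun _ : Fin q => β)).comp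
        (PiTensorProduct.map (fun _ : Fin q => α)) =
        x ^ (2 * q) • (LinearMap.id : (⨂[R] (_ : Fin q), M) →ₗ[R] _) := by
      apply PiTensorProduct.ext
      apply MultilinearMap.ext
      intro m
      simp only [LinearMap.compMultilinearMap_apply, LinearMap.comp_apply,
        PiTensorProduct.map_tprod, LinearMap.smul_apply, LinearMap.id_apply]
      have : (fun i : Fin q => β (α (m i))) = fun i : Fin q => (x * x) • m i := by
        funext i; exact hβα (m i)
      rw [this, MultilinearMap.map_smul_univ]
      congr 1
      rw [Finset.prod_const, Finset.card_fin, mul_pow, two_mul, pow_add]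
    intro t
    have := congrArg (fun f => f t) hmaps
    simpa using this
  have key' : ∀ t : ⨂[R] (_ : Fin q), M',
      PiTensorProduct.map (fun _ : Fin q => α)
        (PiTensorProduct.map (fun _ : Fin q => β) t) = x ^ (2 * q) • t := by
    have hmaps : (PiTensorProduct.map (fun _ : Fin q => α)).comp
        (PiTensorProduct.map (fun _ : Fin q => β)) =
        x ^ (2 * q) • (LinearMap.id : (⨂[R] (_ : Fin q), M') →ₗ[R] _) := by
      apply PiTensorProduct.ext
      apply MultilinearMap.ext
      intro m
      simp only [LinearMap.compMultilinearMap_apply, LinearMap.comp_apply,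
        PiTensorProduct.map_tprod, LinearMap.smul_apply, LinearMap.id_apply]
      have : (fun i : Fin q => α (β (m i))) = fun i : Fin q => (x * x) • m i := by
        funext i; exact hαβ (m i)
      rw [this, MultilinearMap.map_smul_univ]
      congr 1
      rw [Finset.prod_const, Finset.card_fin, mul_pow, two_mul, pow_add]
    intro t
    have := congrArg (fun f => f t) hmaps
    simpa using this
  constructor
  · intro t ht
    rw [LinearMap.mem_ker] at ht
    rw [← key t, ht, map_zero]
  · intro t
    exact ⟨PiTensorProduct.map (fun _ : Fin q => β) t, key' t⟩
end
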